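/- arXiv:1607.06315 — 8 statements merged into one kernel-verified Lean document; each statement's English description precedes it below -/
import Mathlib

section
/- For every prime p and every natural number j ≥ 1, the complete graph K_{p^j} has a K_p-decomposition, i.e., its edge set can be partitioned into edge sets of copies of K_p. -/
/-- The edge set of the complete graph on a finite vertex set `S`: all non-diagonal
unordered pairs of elements of `S`. -/
def cliqueEdges {V : Type*} [DecidableEq V] (S : Finset V) : Finset (Sym2 V) :=
  S.sym2.filter (fun e => ¬ e.IsDiag)

/-- A graph `G` has a `K_p`-decomposition: a list of `p`-element cliques of `G` whose
edge sets are pairwise disjoint and together cover the edge set of `G`. -/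
def SimpleGraph.HasCliqueDecomp {V : Type*} [DecidableEq V] (G : SimpleGraph V) (p : ℕ) : Prop :=
  ∃ l : List (Finset V),
    (∀ S ∈ l, S.card = p ∧ ∀ x ∈ S, ∀ y ∈ S, x ≠ y → G.Adj x y) ∧
    l.Pairwise (fun S T => Disjoint (cliqueEdges S) (cliqueEdges T)) ∧
    (∀ e, e ∈ G.edgeSet ↔ ∃ S ∈ l, e ∈ cliqueEdges S)

lemma mk_mem_cliqueEdges {V : Type*} [DecidableEq V] (S : Finset V) (x y : V) :
    s(x, y) ∈ cliqueEdges S ↔ x ∈ S ∧ y ∈ S ∧ x ≠ y := by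
  simp [cliqueEdges, Finset.mk_mem_sym2_iff, and_assoc]

section lines

variable {p j : ℕ} [Fact p.Prime]

/-- An affine line in `(ZMod p)^j`. -/
def pline (a d : Fin j → ZMod p) : Finset (Fin j → ZMod p) :=
  Finset.image (fun t : ZMod p => a + t • d) Finset.univ

lemma mem_pline {a d x : Fin j → ZMod p} : x ∈ pline a d ↔ ∃ t : ZMod p, a + t • d = x := by
  simp [pline]

lemma pline_card (a : Fin j → ZMod p) {d : Fin j → ZMod p} (hd : d ≠ 0) :
    (pline a d).card = p := by
  rw [pline, Finset.card_image_of_injective _ (fun s t h => ?_)]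
  · simp [ZMod.card]
  · exact smul_left_injective (ZMod p) hd (by simpa using h)

lemma pline_smul (a : Fin j → ZMod p) {c : ZMod p} (hc : c ≠ 0) (d : Fin j → ZMod p) :
    pline a (c • d) = pline a d := by
  ext x
  simp only [mem_pline]
  constructor
  · rintro ⟨t, rfl⟩; exact ⟨t * c, by rw [mul_smul]⟩
  · rintro ⟨t, rfl⟩; exact ⟨t * c⁻¹, by rw [smul_smul, mul_assoc, inv_mul_cancel₀ hc, mul_one]⟩

lemma pline_translate (a : Fin j → ZMod p) (s : ZMod p) (d : Fin j → ZMod p) :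
    pline (a + s • d) d = pline a d := by
  ext x
  simp only [mem_pline]
  constructor
  · rintro ⟨t, rfl⟩; exact ⟨s + t, by rw [add_smul]; abel⟩
  · rintro ⟨t, rfl⟩; exact ⟨t - s, by rw [sub_smul]; abel⟩

/-- Any line through two distinct points `x, y` is the line `pline x (y - x)`. -/
lemma pline_unique {a d x y : Fin j → ZMod p} (hx : x ∈ pline a d) (hy : y ∈ pline a d)
    (hxy : x ≠ y) : pline a d = pline x (y - x) := by
  obtain ⟨t, rfl⟩ := mem_pline.1 hx
  obtain ⟨s, rfl⟩ := mem_pline.1 hy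
  have hst : s - t ≠ 0 := by
    intro h
    apply hxy
    rw [sub_eq_zero] at h
    rw [h]
  have hyx : (a + s • d) - (a + t • d) = (s - t) • d := by rw [sub_smul]; abel
  rw [hyx, pline_smul _ hst, pline_translate]

end lines

lemma top_decomp_of_equiv {V W : Type*} [DecidableEq V] [DecidableEq W] (e : V ≃ W)
    (p : ℕ) (h : (⊤ : SimpleGraph V).HasCliqueDecomp p) :
    (⊤ : SimpleGraph W).HasCliqueDecomp p := by
  obtain ⟨l, hcard, hdisj, hcov⟩ := h
  refine ⟨l.map (Finset.image e), ?_, ?_, ?_⟩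
  · intro S hS
    simp only [List.mem_map] at hS
    obtain ⟨T, hT, rfl⟩ := hS
    refine ⟨by rw [Finset.card_image_of_injective _ e.injective]; exact (hcard T hT).1,
      fun x _ y _ h => SimpleGraph.top_adj x y |>.2 h⟩
  · have key : ∀ S T : Finset V, Disjoint (cliqueEdges S) (cliqueEdges T) →
        Disjoint (cliqueEdges (S.image e)) (cliqueEdges (T.image e)) := by
      intro S T hST
      rw [Finset.disjoint_left]
      intro a haS haT
      induction a using Sym2.ind with
      | _ x y =>
        rw [mk_mem_cliqueEdges] at haS haT
        obtain ⟨hxS, hyS, hxy⟩ := haS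
        obtain ⟨hxT, hyT, -⟩ := haT
        obtain ⟨x', hx', rfl⟩ := Finset.mem_image.1 hxS
        obtain ⟨y', hy', rfl⟩ := Finset.mem_image.1 hyS
        have hx'T : x' ∈ T := by
          obtain ⟨x'', hx'', hxx⟩ := Finset.mem_image.1 hxT
          rwa [e.injective hxx] at hx''
        have hy'T : y' ∈ T := by
          obtain ⟨y'', hy'', hyy⟩ := Finset.mem_image.1 hyT
          rwa [e.injective hyy] at hy''
        have hne : x' ≠ y' := fun h => hxy (by rw [h])
        exact Finset.disjoint_left.1 hST ((mk_mem_cliqueEdges S x' y').2 ⟨hx', hy', hne⟩)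
          ((mk_mem_cliqueEdges T x' y').2 ⟨hx'T, hy'T, hne⟩)
    exact (List.pairwise_map).2 (hdisj.imp_of_mem (fun _ _ h => key _ _ h))
  · intro a
    induction a using Sym2.ind with
    | _ x y =>
      rw [SimpleGraph.mem_edgeSet, SimpleGraph.top_adj]
      constructor
      · intro hxy
        have : s(e.symm x, e.symm y) ∈ (⊤ : SimpleGraph V).edgeSet := by
          rw [SimpleGraph.mem_edgeSet, SimpleGraph.top_adj]
          exact fun h => hxy (by simpa using congrArg e h)
        obtain ⟨S, hS, hmem⟩ := (hcov _).1 this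
        rw [mk_mem_cliqueEdges] at hmem
        refine ⟨S.image e, List.mem_map_of_mem hS, (mk_mem_cliqueEdges _ x y).2
          ⟨?_, ?_, hxy⟩⟩
        · simpa using Finset.mem_image_of_mem e hmem.1
        · simpa using Finset.mem_image_of_mem e hmem.2.1
      · rintro ⟨S, hS, hmem⟩
        rw [mk_mem_cliqueEdges] at hmem
        exact hmem.2.2

theorem top_decomp_vec (p j : ℕ) (hp : p.Prime) :
    (⊤ : SimpleGraph (Fin j → ZMod p)).HasCliqueDecomp p := by
  haveI : Fact p.Prime := ⟨hp⟩
  classical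
  set L : Finset (Finset (Fin j → ZMod p)) :=
    Finset.image (fun q : (Fin j → ZMod p) × (Fin j → ZMod p) => pline q.1 (q.2 - q.1))
      (Finset.univ.filter fun q => q.1 ≠ q.2) with hL
  have hLmem : ∀ S ∈ L, ∃ a d : Fin j → ZMod p, d ≠ 0 ∧ S = pline a d := by
    intro S hS
    rw [hL, Finset.mem_image] at hS
    obtain ⟨q, hq, rfl⟩ := hS
    rw [Finset.mem_filter] at hq
    exact ⟨q.1, q.2 - q.1, sub_ne_zero.2 (Ne.symm hq.2), rfl⟩
  refine ⟨L.toList, ?_, ?_, ?_⟩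
  · intro S hS
    rw [Finset.mem_toList] at hS
    obtain ⟨a, d, hd, rfl⟩ := hLmem S hS
    exact ⟨pline_card a hd, fun x _ y _ h => (SimpleGraph.top_adj x y).2 h⟩
  · refine (List.Pairwise.imp_of_mem ?_ L.nodup_toList)
    intro S T hSmem hTmem hST
    rw [Finset.mem_toList] at hSmem hTmem
    rw [Finset.disjoint_left]
    intro a haS haT
    induction a using Sym2.ind with
    | _ x y =>
      rw [mk_mem_cliqueEdges] at haS haT
      obtain ⟨aS, dS, hdS, rfl⟩ := hLmem S hSmem
      obtain ⟨aT, dT, hdT, rfl⟩ := hLmem T hTmem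
      exact hST ((pline_unique haS.1 haS.2.1 haS.2.2).trans
        (pline_unique haT.1 haT.2.1 haT.2.2).symm)
  · intro a
    induction a using Sym2.ind with
    | _ x y =>
      rw [SimpleGraph.mem_edgeSet, SimpleGraph.top_adj]
      constructor
      · intro hxy
        refine ⟨pline x (y - x), ?_, ?_⟩
        · rw [Finset.mem_toList, hL, Finset.mem_image]
          exact ⟨(x, y), Finset.mem_filter.2 ⟨Finset.mem_univ _, hxy⟩, rfl⟩
        · refine (mk_mem_cliqueEdges _ x y).2 ⟨?_, ?_, hxy⟩
          · exact mem_pline.2 ⟨0, by simp⟩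
          · exact mem_pline.2 ⟨1, by simp⟩
      · rintro ⟨S, _, hmem⟩
        exact ((mk_mem_cliqueEdges S x y).1 hmem).2.2

/-- For every prime `p` and every `j ≥ 1`, the complete graph `K_{p^j}` has a
`K_p`-decomposition. -/
theorem stmt_1 (p : ℕ) (hp : p.Prime) (j : ℕ) (hj : 1 ≤ j) :
    (⊤ : SimpleGraph (Fin (p ^ j))).HasCliqueDecomp p := by
  haveI : Fact p.Prime := ⟨hp⟩
  have hcard : Fintype.card (Fin (p ^ j)) = Fintype.card (Fin j → ZMod p) := by
    simp [ZMod.card]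
  exact top_decomp_of_equiv (Fintype.equivOfCardEq hcard).symm p (top_decomp_vec p j hp)
end

section
/- For every m ≥ 1, the graph G on 12m+3 vertices formed from disjoint sets A, B, C of sizes 4m+2, 4m+3, 4m−2 respectively, whose edges are all pairs inside A, all pairs inside C, and all pairs between A∪C and B, satisfies: every vertex has even degree, 4 divides e(G), and the minimum degree of G is 8m = 2|G|/3 − 2, yet G has no C_4-decomposition. -/
open Finset

def R3 (a b : Fin 3) : Prop :=
  (a = 0 ∧ b = 0) ∨ (a = 2 ∧ b = 2) ∨ (a = 1 ∧ b ≠ 1) ∨ (b = 1 ∧ a ≠ 1)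

instance : DecidableRel R3 := fun a b => by unfold R3; infer_instance

lemma card_filter_val (n : ℕ) (p : ℕ → Prop) [DecidablePred p] :
    ((Finset.univ : Finset (Fin n)).filter (fun x => p x.val)).card
      = ((Finset.range n).filter p).card := by
  apply Finset.card_bij (fun x _ => x.val)
  · intro a ha; simp_all [Fin.is_lt]
  · intro a _ b _ h; exact Fin.val_injective h
  · intro b hb
    simp only [Finset.mem_filter, Finset.mem_range] at hb
    exact ⟨⟨b, hb.1⟩, by simp [hb.2], rfl⟩

lemma card_filter_Ico (n a b : ℕ) (hb : b ≤ n) :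
    ((Finset.univ : Finset (Fin n)).filter (fun x => a ≤ x.val ∧ x.val < b)).card = b - a := by
  rw [card_filter_val n (fun y => a ≤ y ∧ y < b)]
  rw [show (Finset.range n).filter (fun y => a ≤ y ∧ y < b) = Finset.Ico a b by
    ext y; simp [Finset.mem_Ico]; omega]
  simp

def regv (m : ℕ) (x : Fin (12*m+2+1)) : Fin 3 :=
  if x.val < 4*m+2 then 0 else if x.val < 8*m+5 then 1 else 2

lemma regv_eq_zero (m : ℕ) (x : Fin (12*m+2+1)) : regv m x = 0 ↔ x.val < 4*m+2 := by
  unfold regv; split_ifs with h1 h2 <;> simp [h1]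

def sA (m : ℕ) : Finset (Fin (12*m+2+1)) := Finset.univ.filter (fun v => v.val < 4*m+2)

def Agr (m : ℕ) : SimpleGraph (Fin (12*m+2+1)) where
  Adj x y := x ≠ y ∧ x.val < 4*m+2 ∧ y.val < 4*m+2
  symm := ⟨fun x y h => ⟨h.1.symm, h.2.2, h.2.1⟩⟩
  loopless := ⟨fun x h => h.1 rfl⟩

instance (m : ℕ) : DecidableRel (Agr m).Adj := fun x y => by
  show Decidable (_ ∧ _); infer_instance

lemma key3 (a b c d : Fin 3) (h1 : R3 a b) (h2 : R3 b c) (h3 : R3 c d) (h4 : R3 d a) :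
    Even ((if a = 0 ∧ b = 0 then 1 else 0) + ((if b = 0 ∧ c = 0 then 1 else 0) +
      ((if c = 0 ∧ d = 0 then 1 else 0) + (if d = 0 ∧ a = 0 then 1 else 0))) : ℕ) := by
  revert h1 h2 h3 h4; revert a b c d; decide

lemma deg_eq (m : ℕ) (hm : 1 ≤ m) (G : SimpleGraph (Fin (12 * m + 2 + 1))) [DecidableRel G.Adj]
    (hadj : ∀ x y : Fin (12 * m + 2 + 1), G.Adj x y ↔ x ≠ y ∧
      ((x.val < 4 * m + 2 ∧ y.val < 4 * m + 2) ∨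
       (8 * m + 5 ≤ x.val ∧ 8 * m + 5 ≤ y.val) ∨
       ((4 * m + 2 ≤ x.val ∧ x.val < 8 * m + 5) ↔ ¬ (4 * m + 2 ≤ y.val ∧ y.val < 8 * m + 5))))
    (v : Fin (12 * m + 2 + 1)) :
    G.degree v = if v.val < 4*m+2 then 8*m+4 else 8*m := by
  rw [SimpleGraph.degree, SimpleGraph.neighborFinset_eq_filter]
  rcases Nat.lt_or_ge v.val (4*m+2) with hv | hv
  · rw [if_pos hv]
    rw [show Finset.univ.filter (G.Adj v)
        = (Finset.univ.filter (fun y : Fin (12*m+2+1) => 0 ≤ y.val ∧ y.val < 8*m+5)).erase v by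
      ext y
      simp only [Finset.mem_filter, Finset.mem_univ, true_and, Finset.mem_erase, hadj, ne_eq,
        Fin.ext_iff]
      omega]
    have hmem : v ∈ Finset.univ.filter (fun y : Fin (12*m+2+1) => 0 ≤ y.val ∧ y.val < 8*m+5) := by
      simp only [Finset.mem_filter, Finset.mem_univ, true_and]; omega
    have hc := card_filter_Ico (12*m+2+1) 0 (8*m+5) (by omega)
    rw [Finset.card_erase_of_mem hmem, hc]
    omega
  rcases Nat.lt_or_ge v.val (8*m+5) with hv2 | hv2
  · rw [if_neg (by omega)]
    rw [show Finset.univ.filter (G.Adj v)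
        = Finset.univ \ (Finset.univ.filter (fun y : Fin (12*m+2+1) => 4*m+2 ≤ y.val ∧ y.val < 8*m+5)) by
      ext y
      simp only [Finset.mem_filter, Finset.mem_univ, true_and, Finset.mem_sdiff, hadj, ne_eq,
        Fin.ext_iff]
      omega]
    have hc := card_filter_Ico (12*m+2+1) (4*m+2) (8*m+5) (by omega)
    rw [Finset.card_sdiff_of_subset (Finset.filter_subset _ _), hc]
    simp; omega
  · rw [if_neg (by omega)]
    rw [show Finset.univ.filter (G.Adj v)
        = (Finset.univ.filter (fun y : Fin (12*m+2+1) => 4*m+2 ≤ y.val ∧ y.val < 12*m+2+1)).erase v by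
      ext y
      simp only [Finset.mem_filter, Finset.mem_univ, true_and, Finset.mem_erase, hadj, ne_eq,
        Fin.ext_iff]
      omega]
    have hmem : v ∈ Finset.univ.filter (fun y : Fin (12*m+2+1) => 4*m+2 ≤ y.val ∧ y.val < 12*m+2+1) := by
      simp only [Finset.mem_filter, Finset.mem_univ, true_and]; omega
    have hc := card_filter_Ico (12*m+2+1) (4*m+2) (12*m+2+1) (by omega)
    rw [Finset.card_erase_of_mem hmem, hc]
    omega

lemma deg_Agr (m : ℕ) (v : Fin (12*m+2+1)) :
    (Agr m).degree v = if v.val < 4*m+2 then 4*m+1 else 0 := by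
  rw [SimpleGraph.degree, SimpleGraph.neighborFinset_eq_filter]
  rcases Nat.lt_or_ge v.val (4*m+2) with hv | hv
  · rw [if_pos hv]
    rw [show Finset.univ.filter ((Agr m).Adj v)
        = (Finset.univ.filter (fun y : Fin (12*m+2+1) => 0 ≤ y.val ∧ y.val < 4*m+2)).erase v by
      ext y
      simp only [Finset.mem_filter, Finset.mem_univ, true_and, Finset.mem_erase, Agr, ne_eq,
        Fin.ext_iff]
      omega]
    have hmem : v ∈ Finset.univ.filter (fun y : Fin (12*m+2+1) => 0 ≤ y.val ∧ y.val < 4*m+2) := by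
      simp only [Finset.mem_filter, Finset.mem_univ, true_and]; omega
    have hc := card_filter_Ico (12*m+2+1) 0 (4*m+2) (by omega)
    rw [Finset.card_erase_of_mem hmem, hc]
    omega
  · rw [if_neg (by omega)]
    rw [show Finset.univ.filter ((Agr m).Adj v) = (∅ : Finset (Fin (12*m+2+1))) by
      ext y
      simp only [Finset.mem_filter, Finset.mem_univ, true_and, Finset.notMem_empty, iff_false,
        Agr, ne_eq, Fin.ext_iff, not_and]
      omega]
    simp

lemma card_filter_lt (n b : ℕ) (hb : b ≤ n) :
    ((Finset.univ : Finset (Fin n)).filter (fun x => x.val < b)).card = b := by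
  have h := card_filter_Ico n 0 b hb
  rw [show (Finset.univ : Finset (Fin n)).filter (fun x => 0 ≤ x.val ∧ x.val < b)
      = (Finset.univ : Finset (Fin n)).filter (fun x => x.val < b) by
    apply Finset.filter_congr; intro x _; simp] at h
  omega

lemma mem_sym2_A (m : ℕ) (x y : Fin (12*m+2+1)) :
    (s(x,y) ∈ (sA m).sym2) ↔ (regv m x = 0 ∧ regv m y = 0) := by
  rw [Finset.mk_mem_sym2_iff]
  simp [sA, regv_eq_zero]

lemma reg_adj (m : ℕ) (G : SimpleGraph (Fin (12 * m + 2 + 1)))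
    (hadj : ∀ x y : Fin (12 * m + 2 + 1), G.Adj x y ↔ x ≠ y ∧
      ((x.val < 4 * m + 2 ∧ y.val < 4 * m + 2) ∨
       (8 * m + 5 ≤ x.val ∧ 8 * m + 5 ≤ y.val) ∨
       ((4 * m + 2 ≤ x.val ∧ x.val < 8 * m + 5) ↔ ¬ (4 * m + 2 ≤ y.val ∧ y.val < 8 * m + 5))))
    {x y : Fin (12*m+2+1)} (h : G.Adj x y) : R3 (regv m x) (regv m y) := by
  rw [hadj] at h
  obtain ⟨hne, hc⟩ := h
  unfold regv
  split_ifs <;> first | decide | (exfalso; omega)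

lemma card_Agr (m : ℕ) : (Agr m).edgeFinset.card = (2*m+1)*(4*m+1) := by
  have h := (Agr m).sum_degrees_eq_twice_card_edges
  rw [Finset.sum_congr rfl (fun v _ => deg_Agr m v)] at h
  rw [Finset.sum_ite, Finset.sum_const, Finset.sum_const, smul_zero, add_zero,
    card_filter_lt (12*m+2+1) (4*m+2) (by omega), smul_eq_mul] at h
  have h2 : (4*m+2)*(4*m+1) = 2 * ((2*m+1)*(4*m+1)) := by ring
  omega

lemma Agr_edge (m : ℕ) (G : SimpleGraph (Fin (12 * m + 2 + 1))) [DecidableRel G.Adj]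
    (hadj : ∀ x y : Fin (12 * m + 2 + 1), G.Adj x y ↔ x ≠ y ∧
      ((x.val < 4 * m + 2 ∧ y.val < 4 * m + 2) ∨
       (8 * m + 5 ≤ x.val ∧ 8 * m + 5 ≤ y.val) ∨
       ((4 * m + 2 ≤ x.val ∧ x.val < 8 * m + 5) ↔ ¬ (4 * m + 2 ≤ y.val ∧ y.val < 8 * m + 5)))) :
    (Agr m).edgeFinset = G.edgeFinset.filter (fun e => e ∈ (sA m).sym2) := by
  ext e
  induction e using Sym2.ind with
  | _ x y =>
    have hA : (Agr m).Adj x y ↔ (x ≠ y ∧ x.val < 4*m+2 ∧ y.val < 4*m+2) := Iff.rfl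
    rw [Finset.mem_filter]
    simp only [SimpleGraph.mem_edgeFinset, Finset.mem_filter, SimpleGraph.mem_edgeSet,
      Finset.mk_mem_sym2_iff, hadj, hA, sA, Finset.mem_univ, true_and, ne_eq, Fin.ext_iff]
    omega

lemma walk_even (m : ℕ) (G : SimpleGraph (Fin (12 * m + 2 + 1)))
    (hadj : ∀ x y : Fin (12 * m + 2 + 1), G.Adj x y ↔ x ≠ y ∧
      ((x.val < 4 * m + 2 ∧ y.val < 4 * m + 2) ∨
       (8 * m + 5 ≤ x.val ∧ 8 * m + 5 ≤ y.val) ∨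
       ((4 * m + 2 ≤ x.val ∧ x.val < 8 * m + 5) ↔ ¬ (4 * m + 2 ≤ y.val ∧ y.val < 8 * m + 5))))
    (v : Fin (12*m+2+1)) (w : G.Walk v v) (hl : w.length = 4) :
    Even (w.edges.countP (fun e => decide (e ∈ (sA m).sym2))) := by
  cases w with
  | nil => simp at hl
  | cons h1 w1 =>
  cases w1 with
  | nil => simp at hl
  | cons h2 w2 =>
  cases w2 with
  | nil => simp at hl
  | cons h3 w3 =>
  cases w3 with
  | nil => simp at hl
  | cons h4 w4 =>
  cases w4 with
  | cons h5 w5 => simp [SimpleGraph.Walk.length_cons] at hl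
  | nil =>
    simp only [SimpleGraph.Walk.edges_cons, SimpleGraph.Walk.edges_nil, List.countP_cons,
      List.countP_nil, decide_eq_true_eq, mem_sym2_A]
    have k := key3 _ _ _ _ (reg_adj m G hadj h1) (reg_adj m G hadj h2)
      (reg_adj m G hadj h3) (reg_adj m G hadj h4)
    convert k using 1
    ring

/-- A graph `G` has a decomposition into cycles of length `k`. -/
def SimpleGraph.HasCycleDecomp {V : Type*} (G : SimpleGraph V) (k : ℕ) : Prop :=
  ∃ l : List ((v : V) × G.Walk v v),
    (∀ p ∈ l, p.2.IsCycle ∧ p.2.length = k) ∧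
    l.Pairwise (fun p q => p.2.edges.Disjoint q.2.edges) ∧
    (∀ e, e ∈ G.edgeSet ↔ ∃ p ∈ l, e ∈ p.2.edges)

/-- The extremal example for `C₄`: on `12m+3` vertices split into sets `A`, `B`, `C` of
sizes `4m+2`, `4m+3`, `4m-2` (here `A` consists of the vertices with value `< 4m+2`,
`B` of those with value in `[4m+2, 8m+5)`, and `C` of the rest), the graph whose edges
are all pairs inside `A`, all pairs inside `C`, and all pairs between `A ∪ C` and `B`
is `C₄`-divisible, has minimum degree `8m = 2|G|/3 - 2`, but has no
`C₄`-decomposition. -/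
theorem stmt_3 (m : ℕ) (hm : 1 ≤ m) (G : SimpleGraph (Fin (12 * m + 2 + 1)))
    [DecidableRel G.Adj]
    (hadj : ∀ x y : Fin (12 * m + 2 + 1), G.Adj x y ↔ x ≠ y ∧
      ((x.val < 4 * m + 2 ∧ y.val < 4 * m + 2) ∨
       (8 * m + 5 ≤ x.val ∧ 8 * m + 5 ≤ y.val) ∨
       ((4 * m + 2 ≤ x.val ∧ x.val < 8 * m + 5) ↔ ¬ (4 * m + 2 ≤ y.val ∧ y.val < 8 * m + 5)))) :
    (∀ v, Even (G.degree v)) ∧ 4 ∣ G.edgeFinset.card ∧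
      G.minDegree = 8 * m ∧ 8 * m = 2 * Fintype.card (Fin (12 * m + 2 + 1)) / 3 - 2 ∧
      ¬ G.HasCycleDecomp 4 := by
  have hdeg := deg_eq m hm G hadj
  refine ⟨?_, ?_, ?_, ?_, ?_⟩
  · intro v
    rw [hdeg v]
    split_ifs
    · exact ⟨4*m+2, by ring⟩
    · exact ⟨4*m, by ring⟩
  · -- 4 ∣ #edges
    have h := G.sum_degrees_eq_twice_card_edges
    rw [Finset.sum_congr rfl (fun v _ => hdeg v)] at h
    rw [Finset.sum_ite, Finset.sum_const, Finset.sum_const,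
      card_filter_lt (12*m+2+1) (4*m+2) (by omega), Finset.filter_not,
      Finset.card_sdiff_of_subset (Finset.filter_subset _ _),
      card_filter_lt (12*m+2+1) (4*m+2) (by omega), smul_eq_mul, smul_eq_mul] at h
    simp only [Finset.card_univ, Fintype.card_fin] at h
    have h2 : (4*m+2)*(8*m+4) + (12*m+2+1 - (4*m+2))*(8*m) = 8*(12*m*m+5*m+1) := by
      have : 12*m+2+1 - (4*m+2) = 8*m+1 := by omega
      rw [this]; ring
    omega
  · -- minDegree
    apply le_antisymm
    · have h1 := G.minDegree_le_degree ⟨8*m+5, by omega⟩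
      rw [hdeg ⟨8*m+5, by omega⟩] at h1
      rwa [if_neg (by simp; omega)] at h1
    · apply SimpleGraph.le_minDegree_of_forall_le_degree
      intro v
      rw [hdeg v]
      split_ifs <;> omega
  · simp only [Fintype.card_fin]
    omega
  · rintro ⟨l, hcyc, hdisj, hcover⟩
    set p : Sym2 (Fin (12*m+2+1)) → Bool := fun e => decide (e ∈ (sA m).sym2) with hp
    set J : List (Sym2 (Fin (12*m+2+1))) := (l.map fun q => q.2.edges).flatten with hJ
    have hJT : J.toFinset = G.edgeFinset := by
      ext e
      simp only [hJ, List.mem_toFinset, List.mem_flatten, List.mem_map,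
        SimpleGraph.mem_edgeFinset, hcover e]
      constructor
      · rintro ⟨t, ⟨q, hq, rfl⟩, he⟩; exact ⟨q, hq, he⟩
      · rintro ⟨q, hq, he⟩; exact ⟨q.2.edges, ⟨q, hq, rfl⟩, he⟩
    have hnd : J.Nodup := by
      rw [hJ, List.nodup_flatten]
      constructor
      · rintro t ht
        obtain ⟨q, hq, rfl⟩ := List.mem_map.1 ht
        exact (hcyc q hq).1.isCircuit.isTrail.edges_nodup
      · exact List.pairwise_map.2 hdisj
    have heven : Even (J.countP p) := by
      have key : ∀ L : List (List (Sym2 (Fin (12*m+2+1)))),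
          (∀ t ∈ L, Even (t.countP p)) → Even (L.flatten.countP p) := by
        intro L
        induction L with
        | nil => simp
        | cons a L ih =>
          intro h
          rw [List.flatten_cons, List.countP_append]
          exact (h a List.mem_cons_self).add (ih fun t ht => h t (List.mem_cons_of_mem _ ht))
      apply key
      intro t ht
      obtain ⟨q, hq, rfl⟩ := List.mem_map.1 ht
      exact walk_even m G hadj q.1 q.2 (hcyc q hq).2
    have hodd : Odd (J.countP p) := by
      rw [List.countP_eq_length_filter]
      have h1 : (J.filter p).toFinset.card = (J.filter p).length :=
        List.toFinset_card_of_nodup (hnd.filter p)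
      rw [← h1, List.toFinset_filter, hJT]
      have h2 : G.edgeFinset.filter (fun e => p e = true)
          = G.edgeFinset.filter (fun e => e ∈ (sA m).sym2) := by
        apply Finset.filter_congr; intro e _; simp [hp]
      rw [h2, ← Agr_edge m G hadj, card_Agr]
      exact ⟨4*m*m+3*m, by ring⟩
    rw [Nat.not_odd_iff_even.symm] at heven
    exact heven hodd
end

section
/- Let G be a graph on n vertices with minimum degree at least 2n/3 − 1 in which every vertex has even degree, and suppose V(G) is partitioned into nonempty sets A, B, C with e(A,C) = e(B) = 0. Then n ≡ 1 (mod 3); moreover, writing n = 3N+1, we have |A| = |C| = N, |B| = N+1, the graphs G[A], G[C], and G[B, A∪C] are complete, and G is 2N-regular. -/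
open Finset

variable {V : Type*} [Fintype V] [DecidableEq V] [Nonempty V]

/-- The set of edges of `G` with one endpoint in `X` and the other in `Y`
(for disjoint `X`, `Y`). -/
def crossEdges (G : SimpleGraph V) [DecidableRel G.Adj] (X Y : Finset V) : Finset (Sym2 V) :=
  G.edgeFinset.filter fun e => ∃ a ∈ X, ∃ b ∈ Y, e = s(a, b)

/-- The set of edges of `G` with both endpoints in `X`. -/
def innerEdges (G : SimpleGraph V) [DecidableRel G.Adj] (X : Finset V) : Finset (Sym2 V) :=
  G.edgeFinset.filter fun e => ∀ a ∈ e, a ∈ X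

/-- Let `G` be a graph on `n` vertices with minimum degree at least `2n/3 - 1` in which
every vertex has even degree, and suppose the vertex set is partitioned into nonempty
sets `A`, `B`, `C` with `e(A,C) = e(B) = 0`. Then `n ≡ 1 (mod 3)`, and writing
`n = 3N+1`: `|A| = |C| = N`, `|B| = N+1`, the graphs `G[A]`, `G[C]` and `G[B, A ∪ C]`
are complete, and `G` is `2N`-regular. -/
theorem stmt_8 (G : SimpleGraph V) [DecidableRel G.Adj]
    (hδ : (G.minDegree : ℝ) ≥ 2 * (Fintype.card V : ℝ) / 3 - 1)
    (heven : ∀ v : V, Even (G.degree v))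
    (A B C : Finset V) (hA : A.Nonempty) (hB : B.Nonempty) (hC : C.Nonempty)
    (hAB : Disjoint A B) (hAC : Disjoint A C) (hBC : Disjoint B C)
    (hunion : A ∪ B ∪ C = Finset.univ)
    (hac : crossEdges G A C = ∅) (hb : innerEdges G B = ∅) :
    Fintype.card V % 3 = 1 ∧
      ∀ N : ℕ, Fintype.card V = 3 * N + 1 →
        A.card = N ∧ C.card = N ∧ B.card = N + 1 ∧
        (∀ x ∈ A, ∀ y ∈ A, x ≠ y → G.Adj x y) ∧
        (∀ x ∈ C, ∀ y ∈ C, x ≠ y → G.Adj x y) ∧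
        (∀ x ∈ B, ∀ y ∈ A ∪ C, G.Adj x y) ∧
        (∀ v : V, G.degree v = 2 * N) := by

  classical
  have hmem : ∀ x : V, x ∈ A ∨ x ∈ B ∨ x ∈ C := by
    intro x
    have hx : x ∈ A ∪ B ∪ C := hunion ▸ Finset.mem_univ x
    simpa [Finset.mem_union, or_assoc] using hx
  have hAC' : ∀ u ∈ A, ∀ w ∈ C, ¬ G.Adj u w := by
    intro u hu w hw hadj
    have hmem2 : s(u, w) ∈ crossEdges G A C := by
      simp only [crossEdges, Finset.mem_filter, SimpleGraph.mem_edgeFinset]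
      exact ⟨hadj, u, hu, w, hw, rfl⟩
    simp [hac] at hmem2
  have hB' : ∀ u ∈ B, ∀ w ∈ B, ¬ G.Adj u w := by
    intro u hu w hw hadj
    have hmem2 : s(u, w) ∈ innerEdges G B := by
      simp only [innerEdges, Finset.mem_filter, SimpleGraph.mem_edgeFinset]
      refine ⟨hadj, fun a ha => ?_⟩
      rcases Sym2.mem_iff.mp ha with rfl | rfl
      · exact hu
      · exact hw
    simp [hb] at hmem2
  have hAsub : ∀ u ∈ A, G.neighborFinset u ⊆ (A ∪ B).erase u := by
    intro u hu x hx
    rw [SimpleGraph.mem_neighborFinset] at hx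
    refine Finset.mem_erase.mpr ⟨fun h => G.loopless.irrefl u (h ▸ hx), ?_⟩
    rcases hmem x with h | h | h
    · exact Finset.mem_union_left _ h
    · exact Finset.mem_union_right _ h
    · exact absurd hx (hAC' u hu x h)
  have hCsub : ∀ w ∈ C, G.neighborFinset w ⊆ (B ∪ C).erase w := by
    intro w hw x hx
    rw [SimpleGraph.mem_neighborFinset] at hx
    refine Finset.mem_erase.mpr ⟨fun h => G.loopless.irrefl w (h ▸ hx), ?_⟩
    rcases hmem x with h | h | h
    · exact absurd hx.symm (hAC' x h w hw)
    · exact Finset.mem_union_left _ h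
    · exact Finset.mem_union_right _ h
  have hBsub : ∀ v ∈ B, G.neighborFinset v ⊆ A ∪ C := by
    intro v hv x hx
    rw [SimpleGraph.mem_neighborFinset] at hx
    rcases hmem x with h | h | h
    · exact Finset.mem_union_left _ h
    · exact absurd hx (hB' v hv x h)
    · exact Finset.mem_union_right _ h
  have hab : (A ∪ B).card = A.card + B.card := Finset.card_union_of_disjoint hAB
  have hbc : (B ∪ C).card = B.card + C.card := Finset.card_union_of_disjoint hBC
  have hacd : (A ∪ C).card = A.card + C.card := Finset.card_union_of_disjoint hAC
  have hsum : A.card + B.card + C.card = Fintype.card V := by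
    have h := congrArg Finset.card hunion
    rwa [Finset.card_union_of_disjoint (Finset.disjoint_union_left.mpr ⟨hAC, hBC⟩),
      hab, Finset.card_univ] at h
  have hdegA : ∀ u ∈ A, G.degree u + 1 ≤ A.card + B.card := by
    intro u hu
    have h1 : G.degree u ≤ ((A ∪ B).erase u).card := by
      rw [← SimpleGraph.card_neighborFinset_eq_degree]
      exact Finset.card_le_card (hAsub u hu)
    rw [Finset.card_erase_of_mem (Finset.mem_union_left _ hu), hab] at h1
    have h2 : 1 ≤ A.card := Finset.card_pos.mpr hA
    omega
  have hdegC : ∀ w ∈ C, G.degree w + 1 ≤ B.card + C.card := by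
    intro w hw
    have h1 : G.degree w ≤ ((B ∪ C).erase w).card := by
      rw [← SimpleGraph.card_neighborFinset_eq_degree]
      exact Finset.card_le_card (hCsub w hw)
    rw [Finset.card_erase_of_mem (Finset.mem_union_right _ hw), hbc] at h1
    have h2 : 1 ≤ C.card := Finset.card_pos.mpr hC
    omega
  have hdegB : ∀ v ∈ B, G.degree v ≤ A.card + C.card := by
    intro v hv
    have h1 : G.degree v ≤ (A ∪ C).card := by
      rw [← SimpleGraph.card_neighborFinset_eq_degree]
      exact Finset.card_le_card (hBsub v hv)
    rwa [hacd] at h1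
  have hδle : ∀ v, G.minDegree ≤ G.degree v := fun v => G.minDegree_le_degree v
  obtain ⟨v0, hv0⟩ := G.exists_minimal_degree_vertex
  obtain ⟨k, hk⟩ := heven v0
  have hδeven : G.minDegree = k + k := by rw [hv0, hk]
  have hlow : 2 * Fintype.card V ≤ 3 * G.minDegree + 3 := by
    have h : (2 * Fintype.card V : ℝ) ≤ 3 * G.minDegree + 3 := by
      have hn3 : (0:ℝ) < 3 := by norm_num
      nlinarith [hδ]
    exact_mod_cast h
  obtain ⟨u0, hu0⟩ := hA
  obtain ⟨v1, hv1⟩ := hB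
  obtain ⟨w0, hw0⟩ := hC
  have h1 := hdegA u0 hu0
  have h2 := hdegB v1 hv1
  have h3 := hdegC w0 hw0
  have h4 := hδle u0
  have h5 := hδle v1
  have h6 := hδle w0
  constructor
  · omega
  intro N hN
  have hδ2N : G.minDegree = 2 * N := by omega
  have hA_card : A.card = N := by omega
  have hC_card : C.card = N := by omega
  have hB_card : B.card = N + 1 := by omega
  have hAfull : ∀ u ∈ A, G.neighborFinset u = (A ∪ B).erase u := by
    intro u hu
    apply Finset.eq_of_subset_of_card_le (hAsub u hu)
    rw [Finset.card_erase_of_mem (Finset.mem_union_left _ hu), hab,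
      SimpleGraph.card_neighborFinset_eq_degree]
    have := hδle u
    omega
  have hCfull : ∀ w ∈ C, G.neighborFinset w = (B ∪ C).erase w := by
    intro w hw
    apply Finset.eq_of_subset_of_card_le (hCsub w hw)
    rw [Finset.card_erase_of_mem (Finset.mem_union_right _ hw), hbc,
      SimpleGraph.card_neighborFinset_eq_degree]
    have := hδle w
    omega
  refine ⟨hA_card, hC_card, hB_card, ?_, ?_, ?_, ?_⟩
  · intro x hx y hy hxy
    rw [← SimpleGraph.mem_neighborFinset, hAfull x hx]
    exact Finset.mem_erase.mpr ⟨fun h => hxy (h.symm), Finset.mem_union_left _ hy⟩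
  · intro x hx y hy hxy
    rw [← SimpleGraph.mem_neighborFinset, hCfull x hx]
    exact Finset.mem_erase.mpr ⟨fun h => hxy (h.symm), Finset.mem_union_right _ hy⟩
  · intro x hx y hy
    rcases Finset.mem_union.mp hy with h | h
    · have hne : x ≠ y := fun he => (Finset.disjoint_left.mp hAB h) (he ▸ hx)
      have : x ∈ G.neighborFinset y := by
        rw [hAfull y h]
        exact Finset.mem_erase.mpr ⟨hne, Finset.mem_union_right _ hx⟩
      exact (SimpleGraph.mem_neighborFinset _ _ _ |>.mp this).symm
    · have hne : x ≠ y := fun he => (Finset.disjoint_left.mp hBC hx) (he ▸ h)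
      have : x ∈ G.neighborFinset y := by
        rw [hCfull y h]
        exact Finset.mem_erase.mpr ⟨hne, Finset.mem_union_left _ hx⟩
      exact (SimpleGraph.mem_neighborFinset _ _ _ |>.mp this).symm
  · intro v
    rcases hmem v with h | h | h
    · have := congrArg Finset.card (hAfull v h)
      rw [SimpleGraph.card_neighborFinset_eq_degree,
        Finset.card_erase_of_mem (Finset.mem_union_left _ h), hab] at this
      omega
    · have ha := hdegB v h
      have hb2 := hδle v
      omega
    · have := congrArg Finset.card (hCfull v h)
      rw [SimpleGraph.card_neighborFinset_eq_degree,
        Finset.card_erase_of_mem (Finset.mem_union_right _ h), hbc] at this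
      omega
end

section
/- Let G be a graph on n vertices, let 0 < ν ≤ 1, and suppose G is a ν-expander. If H is a subgraph of G with maximum degree Δ(H) ≤ ν n / 4, then G − H is a (ν/2)-expander. -/
variable {V : Type*} [Fintype V]

/-- The robust neighbourhood `R_{ν,G}(S)`: vertices with at least `νn` neighbours in `S`. -/
def robustNbhd (G : SimpleGraph V) (ν : ℝ) (S : Set V) : Set V :=
  {v | ν * (Fintype.card V : ℝ) ≤ ((G.neighborSet v ∩ S).ncard : ℝ)}

/-- A set `S` is `ν`-expanding in `G` if `|R_{ν,G}(S)| ≥ n/2 + νn`. -/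
def IsExpanding (G : SimpleGraph V) (ν : ℝ) (S : Set V) : Prop :=
  (Fintype.card V : ℝ) / 2 + ν * (Fintype.card V : ℝ) ≤ ((robustNbhd G ν S).ncard : ℝ)

/-- `G` is a `ν`-expander if the neighbourhood of every vertex is `ν`-expanding. -/
def IsExpander (G : SimpleGraph V) (ν : ℝ) : Prop :=
  ∀ x : V, IsExpanding G ν (G.neighborSet x)

/-- If `G` is a `ν`-expander on `n` vertices and `H` is a subgraph of `G` with maximum
degree at most `νn/4`, then `G - H` is a `(ν/2)`-expander. -/
theorem stmt_11 (G H : SimpleGraph V) (ν : ℝ) (hν0 : 0 < ν) (hν1 : ν ≤ 1)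
    (hexp : IsExpander G ν) (hHG : H ≤ G)
    (hΔ : ∀ v : V, ((H.neighborSet v).ncard : ℝ) ≤ ν * (Fintype.card V : ℝ) / 4) :
    IsExpander (G \ H) (ν / 2) := by
  intro x
  have key : robustNbhd G ν (G.neighborSet x) ⊆
      robustNbhd (G \ H) (ν / 2) ((G \ H).neighborSet x) := by
    intro v hv
    simp only [robustNbhd, Set.mem_setOf_eq] at hv ⊢
    have hsub : (G.neighborSet v ∩ G.neighborSet x) \ (H.neighborSet v ∪ H.neighborSet x)
        ⊆ (G \ H).neighborSet v ∩ (G \ H).neighborSet x := by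
      rintro u ⟨⟨h1, h2⟩, h3⟩
      simp only [SimpleGraph.mem_neighborSet, Set.mem_union, not_or, SimpleGraph.sdiff_adj] at *
      exact ⟨⟨h1, h3.1⟩, h2, h3.2⟩
    have h1 : ((G.neighborSet v ∩ G.neighborSet x).ncard : ℝ) ≤
        (((G.neighborSet v ∩ G.neighborSet x) \ (H.neighborSet v ∪ H.neighborSet x)).ncard : ℝ)
        + ((H.neighborSet v ∪ H.neighborSet x).ncard : ℝ) := by
      exact_mod_cast Set.ncard_le_ncard_diff_add_ncard _ _ (Set.toFinite _)
    have h2 : ((H.neighborSet v ∪ H.neighborSet x).ncard : ℝ) ≤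
        ((H.neighborSet v).ncard : ℝ) + ((H.neighborSet x).ncard : ℝ) := by
      exact_mod_cast Set.ncard_union_le _ _
    have h3 : (((G.neighborSet v ∩ G.neighborSet x) \ (H.neighborSet v ∪ H.neighborSet x)).ncard : ℝ)
        ≤ (((G \ H).neighborSet v ∩ (G \ H).neighborSet x).ncard : ℝ) := by
      exact_mod_cast Set.ncard_le_ncard hsub (Set.toFinite _)
    have hv' := hΔ v
    have hx' := hΔ x
    linarith
  have hmono : ((robustNbhd G ν (G.neighborSet x)).ncard : ℝ) ≤
      ((robustNbhd (G \ H) (ν / 2) ((G \ H).neighborSet x)).ncard : ℝ) := by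
    exact_mod_cast Set.ncard_le_ncard key (Set.toFinite _)
  have hx := hexp x
  unfold IsExpanding at hx ⊢
  have hn : (0 : ℝ) ≤ (Fintype.card V : ℝ) := by positivity
  nlinarith
end

section
/- Let m ≥ 1 and let G be the graph obtained from the blow-up of the 6-cycle with parts V_1,…,V_6 each of size 2m+1 (complete bipartite graphs between consecutive parts, indices mod 6) by deleting the edges of one 6-cycle that alternates between V_5 and V_6. Then G is bipartite with parts A = V_1∪V_3∪V_5 and B = V_2∪V_4∪V_6 of size 6m+3 each, every vertex has even degree, 4 divides e(G) = 24m(m+1), δ(G) = 4m, and G has no C_4-decomposition. -/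
/-- The removed `6`-cycle alternating between the fifth and sixth parts: `P a b` says the
edge from the `a`-th vertex of `V₅` to the `b`-th vertex of `V₆` is removed. -/
def remPair {m : ℕ} (a b : Fin (2 * m + 1)) : Prop :=
  a.val < 3 ∧ b.val < 3 ∧ (a.val = b.val ∨ a.val = (b.val + 1) % 3)

section Aux

open Finset

instance {m : ℕ} (a b : Fin (2 * m + 1)) : Decidable (remPair a b) := by
  unfold remPair; infer_instance

private lemma aux_cross_parity : ∀ a0 a1 a2 a3 : Fin 6,
    (a1 = a0 + 1 ∨ a0 = a1 + 1) → (a2 = a1 + 1 ∨ a1 = a2 + 1) →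
    (a3 = a2 + 1 ∨ a2 = a3 + 1) → (a0 = a3 + 1 ∨ a3 = a0 + 1) →
    Even ((if (a0 = 0 ∧ a1 = 1) ∨ (a0 = 1 ∧ a1 = 0) then 1 else 0)
      + ((if (a1 = 0 ∧ a2 = 1) ∨ (a1 = 1 ∧ a2 = 0) then 1 else 0)
      + ((if (a2 = 0 ∧ a3 = 1) ∨ (a2 = 1 ∧ a3 = 0) then 1 else 0)
      + (if (a3 = 0 ∧ a0 = 1) ∨ (a3 = 1 ∧ a0 = 0) then 1 else 0)))) := by decide

private lemma aux_walk_len4 {V : Type*} {G : SimpleGraph V} {v : V} (p : G.Walk v v)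
    (h : p.length = 4) :
    ∃ (a b c : V) (_ : G.Adj v a) (_ : G.Adj a b) (_ : G.Adj b c) (_ : G.Adj c v),
      p.edges = [s(v,a), s(a,b), s(b,c), s(c,v)] := by
  cases p with
  | nil => simp at h
  | cons h1 q =>
    cases q with
    | nil => simp at h
    | cons h2 q =>
      cases q with
      | nil => simp at h
      | cons h3 q =>
        cases q with
        | nil => simp at h
        | cons h4 q =>
          cases q with
          | nil => exact ⟨_, _, _, h1, h2, h3, h4, by simp⟩
          | cons h5 q => simp [SimpleGraph.Walk.length_cons] at h

private lemma aux_card_filter_prod {α β : Type*} [Fintype α] [Fintype β] [DecidableEq α]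
    (p : α × β → Prop) [DecidablePred p] :
    (Finset.univ.filter p).card = ∑ j : α, (Finset.univ.filter fun b => p (j, b)).card := by
  rw [Finset.card_eq_sum_card_fiberwise (f := Prod.fst) (t := Finset.univ) (fun x _ => mem_univ _)]
  refine Finset.sum_congr rfl fun j _ => ?_
  rw [Finset.filter_filter]
  refine (Finset.card_nbij (i := fun b => (j, b))
    (s := Finset.univ.filter fun b => p (j, b))
    (t := Finset.univ.filter fun a => p a ∧ a.1 = j) ?_ ?_ ?_).symm
  · intro b hb; simp at hb ⊢; exact hb
  · intro b _ b' _ h; simpa using h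
  · rintro ⟨x1, x2⟩ hx; simp at hx ⊢; obtain ⟨h1, h2⟩ := hx; subst h2; exact ⟨h1, rfl⟩

private lemma aux_pair_card {m : ℕ} (hm : 1 ≤ m) (p : Fin (2 * m + 1) → Prop)
    [DecidablePred p] (c1 c2 : ℕ) (hc1 : c1 < 3) (hc2 : c2 < 3) (hne : c1 ≠ c2)
    (hiff : ∀ b : Fin (2 * m + 1), p b ↔ (b.val = c1 ∨ b.val = c2)) :
    (univ.filter p).card = 2 := by
  have : (univ.filter p) = {⟨c1, by omega⟩, ⟨c2, by omega⟩} := by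
    ext b; simp [hiff, Fin.ext_iff]
  rw [this, Finset.card_pair (by simp [Fin.ext_iff]; omega)]

private lemma aux_remCard {m : ℕ} (hm : 1 ≤ m) (a : Fin (2 * m + 1)) :
    (univ.filter fun b => remPair a b).card = if a.val < 3 then 2 else 0 := by
  by_cases h : a.val < 3
  · rw [if_pos h]
    rcases (by omega : a.val = 0 ∨ a.val = 1 ∨ a.val = 2) with h0 | h0 | h0
    · exact aux_pair_card hm _ 0 2 (by norm_num) (by norm_num) (by norm_num)
        (fun b => by unfold remPair; omega)
    · exact aux_pair_card hm _ 1 0 (by norm_num) (by norm_num) (by norm_num)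
        (fun b => by unfold remPair; omega)
    · exact aux_pair_card hm _ 2 1 (by norm_num) (by norm_num) (by norm_num)
        (fun b => by unfold remPair; omega)
  · rw [if_neg h, Finset.card_eq_zero, Finset.filter_eq_empty_iff]
    intro b _; unfold remPair; omega

private lemma aux_remCard' {m : ℕ} (hm : 1 ≤ m) (a : Fin (2 * m + 1)) :
    (univ.filter fun b => remPair b a).card = if a.val < 3 then 2 else 0 := by
  by_cases h : a.val < 3
  · rw [if_pos h]
    rcases (by omega : a.val = 0 ∨ a.val = 1 ∨ a.val = 2) with h0 | h0 | h0
    · exact aux_pair_card hm _ 0 1 (by norm_num) (by norm_num) (by norm_num)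
        (fun b => by unfold remPair; omega)
    · exact aux_pair_card hm _ 1 2 (by norm_num) (by norm_num) (by norm_num)
        (fun b => by unfold remPair; omega)
    · exact aux_pair_card hm _ 2 0 (by norm_num) (by norm_num) (by norm_num)
        (fun b => by unfold remPair; omega)
  · rw [if_neg h, Finset.card_eq_zero, Finset.filter_eq_empty_iff]
    intro b _; unfold remPair; omega

private lemma aux_degree_eq {m : ℕ} (hm : 1 ≤ m)
    (G : SimpleGraph (Fin 6 × Fin (2 * m + 1))) [DecidableRel G.Adj]
    (hadj : ∀ x y : Fin 6 × Fin (2 * m + 1), G.Adj x y ↔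
      ((y.1 = x.1 + 1 ∨ x.1 = y.1 + 1) ∧
        ¬ ((x.1 = 4 ∧ y.1 = 5 ∧ remPair x.2 y.2) ∨
           (x.1 = 5 ∧ y.1 = 4 ∧ remPair y.2 x.2)))) :
    ∀ (i : Fin 6) (a : Fin (2 * m + 1)),
      G.degree (i, a) = if (i = 4 ∨ i = 5) ∧ a.val < 3 then 4 * m else 4 * m + 2 := by
  intro i a
  have h1 : G.degree (i, a) = (Finset.univ.filter fun y => G.Adj (i, a) y).card := by
    rw [← SimpleGraph.card_neighborFinset_eq_degree]
    congr 1; ext y; simp [SimpleGraph.mem_neighborFinset]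
  rw [h1, aux_card_filter_prod, Fin.sum_univ_six]
  have hnot : ∀ a : Fin (2 * m + 1), (univ.filter fun b => ¬ remPair a b).card
      = 2 * m + 1 - (if a.val < 3 then 2 else 0) := by
    intro a
    rw [Finset.filter_not, Finset.card_sdiff_of_subset (Finset.filter_subset _ _), aux_remCard hm]
    simp
  have hnot' : ∀ a : Fin (2 * m + 1), (univ.filter fun b => ¬ remPair b a).card
      = 2 * m + 1 - (if a.val < 3 then 2 else 0) := by
    intro a
    rw [Finset.filter_not, Finset.card_sdiff_of_subset (Finset.filter_subset _ _), aux_remCard' hm]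
    simp
  fin_cases i <;>
    (simp (config := { decide := true }) [hadj, Finset.filter_true, Finset.filter_false,
      hnot, hnot']) <;>
    first | omega | (split_ifs <;> omega)

private lemma aux_mem_foldr_union {α ι : Type*} [DecidableEq α] (S : ι → Finset α)
    (l : List ι) (e : α) :
    e ∈ (l.map S).foldr (· ∪ ·) ∅ ↔ ∃ p ∈ l, e ∈ S p := by
  induction l with
  | nil => simp
  | cons p l ih => simp [ih]

private lemma aux_even_foldr_union {α ι : Type*} [DecidableEq α] (S : ι → Finset α)
    (hS : ∀ p, ∀ e ∈ S p, True) :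
    ∀ l : List ι, l.Pairwise (fun p q => Disjoint (S p) (S q)) →
      (∀ p ∈ l, Even (S p).card) → Even ((l.map S).foldr (· ∪ ·) ∅).card := by
  intro l
  induction l with
  | nil => intro _ _; simp
  | cons p l ih =>
    intro hpw hev
    rw [List.pairwise_cons] at hpw
    have hdisj : Disjoint (S p) ((l.map S).foldr (· ∪ ·) ∅) := by
      rw [Finset.disjoint_left]
      intro e he hef
      rw [aux_mem_foldr_union] at hef
      obtain ⟨q, hq, heq⟩ := hef
      exact (Finset.disjoint_left.mp (hpw.1 q hq)) he heq
    simp only [List.map_cons, List.foldr_cons]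
    rw [Finset.card_union_of_disjoint hdisj]
    exact (hev p (List.mem_cons_self)).add
      (ih hpw.2 (fun q hq => hev q (List.mem_cons_of_mem _ hq)))

end Aux

/-- Let `m ≥ 1` and let `G` be the blow-up of the `6`-cycle, with parts
`V_1, …, V_6` of size `2m+1` (part `i` being `{i} × Fin (2m+1)`, consecutive parts
completely joined, indices mod 6), minus one `6`-cycle alternating between `V_5` and
`V_6`. Then `G` is bipartite with parts `A = V_1 ∪ V_3 ∪ V_5` and `B = V_2 ∪ V_4 ∪ V_6`
of size `6m+3`, every vertex has even degree, `e(G) = 24m(m+1)` is divisible by `4`,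
`δ(G) = 4m`, but `G` has no `C₄`-decomposition. -/
theorem stmt_15 (m : ℕ) (hm : 1 ≤ m)
    (G : SimpleGraph (Fin 6 × Fin (2 * m + 1))) [DecidableRel G.Adj]
    (hadj : ∀ x y : Fin 6 × Fin (2 * m + 1), G.Adj x y ↔
      ((y.1 = x.1 + 1 ∨ x.1 = y.1 + 1) ∧
        ¬ ((x.1 = 4 ∧ y.1 = 5 ∧ remPair x.2 y.2) ∨
           (x.1 = 5 ∧ y.1 = 4 ∧ remPair y.2 x.2)))) :
    (∀ x y, G.Adj x y → x.1.val % 2 ≠ y.1.val % 2) ∧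
      (Finset.univ.filter fun v : Fin 6 × Fin (2 * m + 1) => v.1.val % 2 = 0).card
        = 6 * m + 3 ∧
      (Finset.univ.filter fun v : Fin 6 × Fin (2 * m + 1) => v.1.val % 2 = 1).card
        = 6 * m + 3 ∧
      (∀ v, Even (G.degree v)) ∧
      G.edgeFinset.card = 24 * m * (m + 1) ∧ 4 ∣ G.edgeFinset.card ∧
      G.minDegree = 4 * m ∧
      ¬ G.HasCycleDecomp 4 := by
  classical
  open Finset in
  have hdeg := aux_degree_eq hm G hadj
  -- part 1 : bipartite
  have part1 : ∀ x y, G.Adj x y → x.1.val % 2 ≠ y.1.val % 2 := by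
    intro x y h
    rw [hadj] at h
    exact (by decide : ∀ a b : Fin 6, (b = a + 1 ∨ a = b + 1) → a.val % 2 ≠ b.val % 2)
      x.1 y.1 h.1
  -- parts 2,3 : sizes of the two sides
  have part2 : (Finset.univ.filter
      fun v : Fin 6 × Fin (2 * m + 1) => v.1.val % 2 = 0).card = 6 * m + 3 := by
    rw [aux_card_filter_prod, Fin.sum_univ_six]
    simp (config := { decide := true }) [Finset.filter_true, Finset.filter_false]
    omega
  have part3 : (Finset.univ.filter
      fun v : Fin 6 × Fin (2 * m + 1) => v.1.val % 2 = 1).card = 6 * m + 3 := by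
    rw [aux_card_filter_prod, Fin.sum_univ_six]
    simp (config := { decide := true }) [Finset.filter_true, Finset.filter_false]
    omega
  -- part 4 : even degrees
  have part4 : ∀ v, Even (G.degree v) := by
    rintro ⟨i, a⟩
    rw [hdeg]
    split_ifs
    exacts [⟨2 * m, by ring⟩, ⟨2 * m + 1, by ring⟩]
  -- part 5 : edge count
  have card3 : (Finset.univ.filter fun a : Fin (2 * m + 1) => a.val < 3).card = 3 := by
    have : (Finset.univ.filter fun a : Fin (2 * m + 1) => a.val < 3)
        = {⟨0, by omega⟩, ⟨1, by omega⟩, ⟨2, by omega⟩} := by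
      ext b; simp only [Finset.mem_filter, Finset.mem_univ, true_and, Finset.mem_insert, Finset.mem_singleton, Fin.ext_iff, Fin.val_mk]; omega
    rw [this]
    rw [Finset.card_insert_of_notMem (by simp [Fin.ext_iff]),
      Finset.card_insert_of_notMem (by simp [Fin.ext_iff]), Finset.card_singleton]
  have part5 : G.edgeFinset.card = 24 * m * (m + 1) := by
    obtain ⟨c, hc⟩ : ∃ c, m = c + 1 := ⟨m - 1, by omega⟩
    subst hc
    have hsum := G.sum_degrees_eq_twice_card_edges
    rw [Fintype.sum_prod_type] at hsum
    simp only [hdeg] at hsum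
    rw [Fin.sum_univ_six] at hsum
    have hin : ∑ a : Fin (2 * (c + 1) + 1), (if a.val < 3 then 4 * (c + 1) else 4 * (c + 1) + 2)
        = 3 * (4 * (c + 1)) + (2 * (c + 1) + 1 - 3) * (4 * (c + 1) + 2) := by
      rw [Finset.sum_ite, Finset.sum_const, Finset.sum_const, card3, smul_eq_mul, smul_eq_mul]
      congr 1
      rw [Finset.filter_not, Finset.card_sdiff_of_subset (Finset.filter_subset _ _), card3]
      simp
    simp (config := { decide := true }) at hsum
    rw [hin] at hsum
    have hE : (Finset.filter (Membership.mem G.edgeSet) Finset.univ) = G.edgeFinset := by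
      ext e; simp [SimpleGraph.mem_edgeFinset]
    have h3 : 2 * (c + 1) + 1 - 3 = 2 * c := by omega
    rw [h3] at hsum
    have h2 : 2 * G.edgeFinset.card = 2 * (24 * (c + 1) * ((c + 1) + 1)) := by
      rw [← hsum]; ring
    omega
  -- part 6 : min degree
  haveI : Nonempty (Fin 6 × Fin (2 * m + 1)) := ⟨((0 : Fin 6), ⟨0, by omega⟩)⟩
  have part6 : G.minDegree = 4 * m := by
    apply le_antisymm
    · have h := G.minDegree_le_degree ((4 : Fin 6), ⟨0, by omega⟩)
      rw [hdeg, if_pos ⟨Or.inl rfl, by norm_num⟩] at h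
      exact h
    · apply SimpleGraph.le_minDegree_of_forall_le_degree
      rintro ⟨i, a⟩
      rw [hdeg]
      split_ifs <;> omega
  refine ⟨part1, part2, part3, part4, part5, ⟨6 * m * (m + 1), by rw [part5]; ring⟩, part6, ?_⟩
  rintro ⟨l, hcyc, hdisj, hcover⟩
  let crossE : Sym2 (Fin 6 × Fin (2 * m + 1)) → Prop :=
    fun e => Sym2.map Prod.fst e = s((0 : Fin 6), (1 : Fin 6))
  haveI : DecidablePred crossE := fun e => by unfold crossE; infer_instance
  have hcross : ∀ x y : Fin 6 × Fin (2 * m + 1),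
      crossE s(x, y) ↔ ((x.1 = 0 ∧ y.1 = 1) ∨ (x.1 = 1 ∧ y.1 = 0)) := by
    intro x y
    show Sym2.map Prod.fst s(x, y) = _ ↔ _
    rw [Sym2.map_pair_eq, Sym2.eq_iff]
  set T : Finset (Sym2 (Fin 6 × Fin (2 * m + 1))) := G.edgeFinset.filter crossE with hTdef
  have hTcard : T.card = (2 * m + 1) * (2 * m + 1) := by
    have hinj : Function.Injective
        (fun ab : Fin (2 * m + 1) × Fin (2 * m + 1) =>
          s(((0 : Fin 6), ab.1), ((1 : Fin 6), ab.2))) := by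
      rintro ⟨a, b⟩ ⟨a', b'⟩ h
      simp only [Sym2.eq_iff, Prod.mk.injEq] at h
      rcases h with ⟨⟨-, h1⟩, ⟨-, h2⟩⟩ | ⟨⟨h0, -⟩, -⟩
      · simp [h1, h2]
      · exact absurd h0 (by decide)
    have himg : T = (Finset.univ : Finset (Fin (2 * m + 1) × Fin (2 * m + 1))).image
        (fun ab => s(((0 : Fin 6), ab.1), ((1 : Fin 6), ab.2))) := by
      ext e
      induction e using Sym2.ind with
      | _ x y =>
        simp only [hTdef, Finset.mem_filter, SimpleGraph.mem_edgeFinset,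
          Finset.mem_image, Finset.mem_univ, true_and]
        constructor
        · rintro ⟨he, hc⟩
          rw [SimpleGraph.mem_edgeSet] at he
          obtain ⟨x1, x2⟩ := x
          obtain ⟨y1, y2⟩ := y
          rw [hcross] at hc
          dsimp only at hc
          rcases hc with ⟨hx, hy⟩ | ⟨hx, hy⟩
          · subst hx; subst hy; exact ⟨⟨x2, y2⟩, rfl⟩
          · subst hx; subst hy; exact ⟨⟨y2, x2⟩, Sym2.eq_swap⟩
        · rintro ⟨⟨a, b⟩, hab⟩
          rw [← hab]
          refine ⟨?_, ?_⟩
          · rw [SimpleGraph.mem_edgeSet, hadj]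
            refine ⟨Or.inl rfl, ?_⟩
            rintro (⟨h0, -⟩ | ⟨h0, -⟩) <;> simp at h0
          · rw [hcross]; exact Or.inl ⟨rfl, rfl⟩
    rw [himg, Finset.card_image_of_injective _ hinj, Finset.card_univ]
    simp [Fintype.card_prod]
  let S : ((v : Fin 6 × Fin (2 * m + 1)) × G.Walk v v) → Finset (Sym2 (Fin 6 × Fin (2 * m + 1))) :=
    fun p => p.2.edges.toFinset.filter crossE
  have hSsub : ∀ p e, e ∈ S p → e ∈ p.2.edges := by
    intro p e he
    simp only [S, Finset.mem_filter, List.mem_toFinset] at he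
    exact he.1
  have hB : ∀ p ∈ l, Even (S p).card := by
    intro p hp
    obtain ⟨hc, hl4⟩ := hcyc p hp
    obtain ⟨a, b, c, h1, h2, h3, h4, hedges⟩ := aux_walk_len4 p.2 hl4
    have hnd : p.2.edges.Nodup := hc.isCircuit.isTrail.edges_nodup
    have hcc : (S p).card = (p.2.edges.map (fun e => if crossE e then 1 else 0)).sum := by
      rw [show S p = p.2.edges.toFinset.filter crossE from rfl, Finset.card_filter]
      exact List.sum_toFinset _ hnd
    rw [hcc, hedges]
    simp only [List.map_cons, List.map_nil, List.sum_cons, List.sum_nil, add_zero]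
    simp only [hcross]
    have r1 := ((hadj _ _).mp h1).1
    have r2 := ((hadj _ _).mp h2).1
    have r3 := ((hadj _ _).mp h3).1
    have r4 := ((hadj _ _).mp h4).1
    exact aux_cross_parity p.1.1 a.1 b.1 c.1 r1 r2 r3 r4
  have hSdisj : l.Pairwise (fun p q => Disjoint (S p) (S q)) := by
    refine hdisj.imp ?_
    intro p q h
    rw [Finset.disjoint_left]
    intro e he1 he2
    exact h (hSsub p e he1) (hSsub q e he2)
  have heven : Even ((l.map S).foldr (· ∪ ·) ∅).card :=
    aux_even_foldr_union S (fun _ _ _ => trivial) l hSdisj hB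
  have hTeq : T = (l.map S).foldr (· ∪ ·) ∅ := by
    ext e
    rw [aux_mem_foldr_union]
    simp only [hTdef, Finset.mem_filter, SimpleGraph.mem_edgeFinset]
    constructor
    · rintro ⟨he, hcr⟩
      obtain ⟨p, hp, hep⟩ := (hcover e).mp he
      exact ⟨p, hp, by simp only [S, Finset.mem_filter, List.mem_toFinset]; exact ⟨hep, hcr⟩⟩
    · rintro ⟨p, hp, hep⟩
      simp only [S, Finset.mem_filter, List.mem_toFinset] at hep
      exact ⟨(hcover e).mpr ⟨p, hp, hep.1⟩, hep.2⟩
  rw [hTeq] at hTcard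
  rcases Nat.even_mul.mp (hTcard ▸ heven) with h | h <;>
    · obtain ⟨t, ht⟩ := h; omega
end

section
/- Let k ≥ 3 be odd and choose m with 4m ≡ k−1 (mod 2k). Let G be the disjoint union of K_{2m+1,2m+1} minus a perfect matching and K_{2m,2m}. Then G is a balanced bipartite graph with parts of size 4m+1, every vertex has even degree 2m, 2k divides e(G) = 2m(4m+1), but G has no C_{2k}-decomposition. -/
open Finset

lemma filter_sum_card' {α β : Type*} [Fintype α] [Fintype β] [DecidableEq α] [DecidableEq β]
    (p : α ⊕ β → Prop) [DecidablePred p] :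
    (univ.filter p).card
      = (univ.filter (fun a => p (Sum.inl a))).card + (univ.filter (fun b => p (Sum.inr b))).card := by
  rw [show (univ : Finset (α ⊕ β)).filter p
      = (univ.filter (fun a => p (Sum.inl a))).disjSum (univ.filter (fun b => p (Sum.inr b))) from ?_,
    Finset.card_disjSum]
  ext x
  cases x <;> simp

lemma nt1' (k m : ℕ) (hk : 3 ≤ k) (hko : Odd k) (hm : 4 * m ≡ k - 1 [MOD 2 * k]) :
    2 * k ∣ 2 * m * (4 * m + 1) := by
  have h1 : 4 * m + 1 ≡ k [MOD 2 * k] := by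
    have := hm.add_right 1
    rwa [show k - 1 + 1 = k by omega] at this
  have h4 : 2 * (4 * m * (4 * m + 1)) ≡ 2 * ((k - 1) * k) [MOD 2 * k] :=
    ((hm.mul h1)).mul_left 2
  have hz : (2 * k) ∣ 2 * ((k - 1) * k) := ⟨k - 1, by ring⟩
  have h5 : (2 * k) ∣ 2 * (4 * m * (4 * m + 1)) :=
    (Nat.modEq_zero_iff_dvd).1 (h4.trans ((Nat.modEq_zero_iff_dvd).2 hz))
  have h7 : k ∣ 2 * (2 * m * (4 * m + 1)) := by
    rcases h5 with ⟨c, hc⟩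
    refine ⟨c, ?_⟩
    have h9 : 2 * (2 * (2 * m * (4 * m + 1))) = 2 * (k * c) := by
      rw [show 2 * (k * c) = 2 * k * c by ring, ← hc]; ring
    omega
  have hcop : Nat.Coprime 2 k := Nat.coprime_two_left.2 hko
  have h8 : k ∣ 2 * m * (4 * m + 1) := (Nat.Coprime.dvd_of_dvd_mul_left hcop.symm h7)
  exact Nat.Coprime.mul_dvd_of_dvd_of_dvd hcop ⟨m * (4 * m + 1), by ring⟩ h8


lemma foldr_mem {α : Type*} [DecidableEq α] (L : List (Finset α)) (x : α) :
    x ∈ L.foldr (· ∪ ·) ∅ ↔ ∃ t ∈ L, x ∈ t := by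
  induction L with
  | nil => simp
  | cons a L ih => simp [ih]

lemma foldr_disj {α : Type*} [DecidableEq α] (a : Finset α) (L : List (Finset α))
    (h : ∀ b ∈ L, Disjoint a b) : Disjoint a (L.foldr (· ∪ ·) ∅) := by
  induction L with
  | nil => simp
  | cons b L ih =>
    simp only [List.foldr_cons, Finset.disjoint_union_right]
    exact ⟨h b (by simp), ih fun c hc => h c (by simp [hc])⟩

lemma foldr_card {α : Type*} [DecidableEq α] (L : List (Finset α)) (h : L.Pairwise Disjoint) :
    (L.foldr (· ∪ ·) ∅).card = (L.map Finset.card).sum := by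
  induction L with
  | nil => simp
  | cons a L ih =>
    rw [List.pairwise_cons] at h
    simp only [List.foldr_cons, List.map_cons, List.sum_cons]
    rw [Finset.card_union_of_disjoint (foldr_disj a L h.1), ih h.2]

lemma walk_side {V : Type*} {G : SimpleGraph V} (s : V → Bool)
    (hs : ∀ x y, G.Adj x y → s x = s y) {u v : V} (p : G.Walk u v) :
    ∀ w ∈ p.support, s w = s u := by
  induction p with
  | nil => intro w hw; simp at hw; subst hw; rfl
  | cons h p ih =>
    intro w hw
    rw [SimpleGraph.Walk.support_cons] at hw
    rcases List.mem_cons.1 hw with rfl | hw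
    · rfl
    · rw [ih w hw]; exact (hs _ _ h).symm

lemma no_decomp (k m : ℕ) (hk : 3 ≤ k) (hko : Odd k)
    (hm : 4 * m ≡ k - 1 [MOD 2 * k])
    (G : SimpleGraph ((Fin (2 * m + 1) ⊕ Fin (2 * m + 1)) ⊕ (Fin (2 * m) ⊕ Fin (2 * m))))
    [DecidableRel G.Adj]
    (hadj : ∀ x y, G.Adj x y ↔
      ((∃ a b, a ≠ b ∧ ((x = Sum.inl (Sum.inl a) ∧ y = Sum.inl (Sum.inr b)) ∨
                        (x = Sum.inl (Sum.inr a) ∧ y = Sum.inl (Sum.inl b)))) ∨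
       (∃ a b, (x = Sum.inr (Sum.inl a) ∧ y = Sum.inr (Sum.inr b)) ∨
               (x = Sum.inr (Sum.inr a) ∧ y = Sum.inr (Sum.inl b)))))
    (hcard : G.edgeFinset.card = 2 * m * (4 * m + 1))
    (hdvd : 2 * k ∣ G.edgeFinset.card) :
    ¬ G.HasCycleDecomp (2 * k) := by
  classical
  rintro ⟨l, hcyc, hpair, hcov⟩
  set s : (Fin (2 * m + 1) ⊕ Fin (2 * m + 1)) ⊕ (Fin (2 * m) ⊕ Fin (2 * m)) → Bool := Sum.elim (fun _ => true) (fun _ => false) with hs_def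
  have hs : ∀ x y, G.Adj x y → s x = s y := by
    intro x y hxy
    rw [hadj] at hxy
    rcases hxy with ⟨a, b, _, ⟨rfl, rfl⟩ | ⟨rfl, rfl⟩⟩ | ⟨a, b, ⟨rfl, rfl⟩ | ⟨rfl, rfl⟩⟩ <;> rfl
  -- E₂ : edges of the second component
  set E₂ : Finset (Sym2 _) := G.edgeFinset.filter (fun e => ∀ v ∈ e, s v = false) with hE2_def
  -- card of E₂
  have hE2card : E₂.card = 2 * m * (2 * m) := by
    have himg : E₂ = (univ : Finset (Fin (2 * m) × Fin (2 * m))).image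
        (fun ab => s(Sum.inr (Sum.inl ab.1), Sum.inr (Sum.inr ab.2))) := by
      ext e
      induction e with
      | _ x y =>
        simp only [hE2_def, Finset.mem_filter, SimpleGraph.mem_edgeFinset,
          SimpleGraph.mem_edgeSet, Finset.mem_image, Finset.mem_univ, true_and]
        constructor
        · rintro ⟨hxy, hall⟩
          rw [hadj] at hxy
          rcases hxy with ⟨a, b, _, ⟨rfl, rfl⟩ | ⟨rfl, rfl⟩⟩ | ⟨a, b, ⟨rfl, rfl⟩ | ⟨rfl, rfl⟩⟩
          · exact absurd (hall _ (Sym2.mem_mk_left _ _)) (by simp [hs_def])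
          · exact absurd (hall _ (Sym2.mem_mk_left _ _)) (by simp [hs_def])
          · exact ⟨(a, b), rfl⟩
          · exact ⟨(b, a), Sym2.eq_swap⟩
        · rintro ⟨⟨a, b⟩, hab⟩
          refine ⟨?_, ?_⟩
          · rw [← SimpleGraph.mem_edgeSet, ← hab, SimpleGraph.mem_edgeSet, hadj]
            exact Or.inr ⟨a, b, Or.inl ⟨rfl, rfl⟩⟩
          · intro v hv
            rw [← hab] at hv
            rcases Sym2.mem_iff.1 hv with rfl | rfl <;> rfl
    rw [himg, Finset.card_image_of_injective, Finset.card_univ]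
    · simp
    · rintro ⟨a, b⟩ ⟨c, d⟩ h
      simp only [Sym2.eq, Sym2.rel_iff', Prod.mk.injEq, Prod.swap_prod_mk] at h
      rcases h with ⟨h1, h2⟩ | ⟨h1, h2⟩
      · simp only [Sum.inr.injEq, Sum.inl.injEq] at h1 h2
        exact Prod.ext h1 h2
      · exact absurd h1 (by simp)
  -- the cycles on the second side
  set l₂ := l.filter (fun p => !(s p.1)) with hl2_def
  set L := l₂.map (fun p => p.2.edges.toFinset) with hL_def
  have hLpair : L.Pairwise Disjoint := by
    refine List.Pairwise.map _ ?_ (hpair.sublist List.filter_sublist)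
    intro p q hpq
    rw [Finset.disjoint_left]
    intro e he he'
    exact hpq (List.mem_toFinset.1 he) (List.mem_toFinset.1 he')
  have hE2eq : E₂ = L.foldr (· ∪ ·) ∅ := by
    ext e
    rw [foldr_mem]
    simp only [hL_def, List.mem_map, hl2_def, List.mem_filter, Bool.not_eq_true', List.mem_toFinset]
    constructor
    · intro he
      rw [hE2_def, Finset.mem_filter, SimpleGraph.mem_edgeFinset] at he
      obtain ⟨p, hp, hep⟩ := (hcov e).1 he.1
      refine ⟨_, ⟨p, ⟨hp, ?_⟩, rfl⟩, List.mem_toFinset.2 hep⟩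
      induction e with
      | _ x y =>
        have hx : x ∈ p.2.support := SimpleGraph.Walk.fst_mem_support_of_mem_edges _ hep
        have := walk_side s hs p.2 x hx
        rw [he.2 x (Sym2.mem_mk_left _ _)] at this
        exact this.symm
    · rintro ⟨_, ⟨p, ⟨hp, hps⟩, rfl⟩, hepf⟩
      have hep := List.mem_toFinset.1 hepf
      rw [hE2_def, Finset.mem_filter, SimpleGraph.mem_edgeFinset]
      refine ⟨p.2.edges_subset_edgeSet hep, ?_⟩
      intro v hv
      induction e with
      | _ x y =>
        rcases Sym2.mem_iff.1 hv with rfl | rfl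
        · rw [walk_side s hs p.2 v (SimpleGraph.Walk.fst_mem_support_of_mem_edges _ hep), hps]
        · rw [walk_side s hs p.2 v (SimpleGraph.Walk.snd_mem_support_of_mem_edges _ hep), hps]
  -- each cycle contributes 2k edges
  have h2kE2 : 2 * k ∣ E₂.card := by
    rw [hE2eq, foldr_card L hLpair]
    apply List.dvd_sum
    intro c hc
    rw [hL_def, List.map_map, List.mem_map] at hc
    obtain ⟨p, hp, rfl⟩ := hc
    have hp' : p ∈ l := List.mem_of_mem_filter hp
    have hc1 := (hcyc p hp').1
    have hc2 := (hcyc p hp').2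
    simp only [Function.comp_apply]
    rw [List.toFinset_card_of_nodup hc1.edges_nodup, SimpleGraph.Walk.length_edges, hc2]
  -- derive contradiction
  rw [hE2card] at h2kE2
  rw [hcard] at hdvd
  have h8 : 2 * k ∣ 2 * (2 * m * (2 * m)) := h2kE2.mul_left 2
  have h2m : 2 * k ∣ 2 * m := by
    have heq : 2 * m * (4 * m + 1) = 2 * (2 * m * (2 * m)) + 2 * m := by ring
    have := Nat.dvd_sub hdvd h8
    rwa [heq, Nat.add_sub_cancel_left] at this
  have h4m : 2 * k ∣ 4 * m := by
    obtain ⟨c, hc⟩ := h2m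
    exact ⟨2 * c, by rw [show 4 * m = 2 * (2 * m) by ring, hc]; ring⟩
  have : 2 * k ∣ k - 1 :=
    (Nat.modEq_zero_iff_dvd).1 ((((Nat.modEq_zero_iff_dvd).2 h4m).symm.trans hm).symm)
  have := Nat.le_of_dvd (by omega) this
  omega


/-- Let `k ≥ 3` be odd and `4m ≡ k-1 (mod 2k)`. The disjoint union `G` of
`K_{2m+1,2m+1}` minus a perfect matching and `K_{2m,2m}` is a balanced bipartite graph
with parts of size `4m+1`, every vertex has even degree `2m`, `2k` divides
`e(G) = 2m(4m+1)`, but `G` has no `C_{2k}`-decomposition. -/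
theorem stmt_16 (k m : ℕ) (hk : 3 ≤ k) (hko : Odd k)
    (hm : 4 * m ≡ k - 1 [MOD 2 * k])
    (G : SimpleGraph ((Fin (2 * m + 1) ⊕ Fin (2 * m + 1)) ⊕ (Fin (2 * m) ⊕ Fin (2 * m))))
    [DecidableRel G.Adj]
    (hadj : ∀ x y, G.Adj x y ↔
      ((∃ a b, a ≠ b ∧ ((x = Sum.inl (Sum.inl a) ∧ y = Sum.inl (Sum.inr b)) ∨
                        (x = Sum.inl (Sum.inr a) ∧ y = Sum.inl (Sum.inl b)))) ∨
       (∃ a b, (x = Sum.inr (Sum.inl a) ∧ y = Sum.inr (Sum.inr b)) ∨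
               (x = Sum.inr (Sum.inr a) ∧ y = Sum.inr (Sum.inl b))))) :
    (∃ c : (Fin (2 * m + 1) ⊕ Fin (2 * m + 1)) ⊕ (Fin (2 * m) ⊕ Fin (2 * m)) → Bool,
        (∀ x y, G.Adj x y → c x ≠ c y) ∧
        (Finset.univ.filter fun v => c v = true).card = 4 * m + 1 ∧
        (Finset.univ.filter fun v => c v = false).card = 4 * m + 1) ∧
      (∀ v, G.degree v = 2 * m ∧ Even (G.degree v)) ∧
      (2 * k) ∣ G.edgeFinset.card ∧ G.edgeFinset.card = 2 * m * (4 * m + 1) ∧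
      ¬ G.HasCycleDecomp (2 * k) := by
  have hdeg : ∀ v, G.degree v = 2 * m := by  
    intro v
    rw [SimpleGraph.degree]
    match v with
    | Sum.inl (Sum.inl a) =>
      rw [show G.neighborFinset (Sum.inl (Sum.inl a))
          = (univ.erase a).image (fun b => Sum.inl (Sum.inr b)) from ?_]
      · rw [Finset.card_image_of_injective _ (by intro x y h; simpa using h),
          Finset.card_erase_of_mem (mem_univ a), Finset.card_univ]
        simp
      · ext y
        simp only [SimpleGraph.mem_neighborFinset, hadj, Finset.mem_image, Finset.mem_erase,
          Finset.mem_univ, and_true]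
        constructor
        · rintro (⟨a', b, hab, ⟨hx, rfl⟩ | ⟨hx, rfl⟩⟩ | ⟨a', b, ⟨hx, rfl⟩ | ⟨hx, rfl⟩⟩)
          · injection hx with hx; injection hx with hx; subst hx
            exact ⟨b, Ne.symm hab, rfl⟩
          · injection hx with hx; exact (Sum.inl_ne_inr hx).elim
          · exact (Sum.inl_ne_inr hx).elim
          · exact (Sum.inl_ne_inr hx).elim
        · rintro ⟨b, hb, rfl⟩
          exact Or.inl ⟨a, b, Ne.symm hb, Or.inl ⟨rfl, rfl⟩⟩
    | Sum.inl (Sum.inr a) =>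
      rw [show G.neighborFinset (Sum.inl (Sum.inr a))
          = (univ.erase a).image (fun b => Sum.inl (Sum.inl b)) from ?_]
      · rw [Finset.card_image_of_injective _ (by intro x y h; simpa using h),
          Finset.card_erase_of_mem (mem_univ a), Finset.card_univ]
        simp
      · ext y
        simp only [SimpleGraph.mem_neighborFinset, hadj, Finset.mem_image, Finset.mem_erase,
          Finset.mem_univ, and_true]
        constructor
        · rintro (⟨a', b, hab, ⟨hx, rfl⟩ | ⟨hx, rfl⟩⟩ | ⟨a', b, ⟨hx, rfl⟩ | ⟨hx, rfl⟩⟩)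
          · injection hx with hx; exact (Sum.inr_ne_inl hx).elim
          · injection hx with hx; injection hx with hx; subst hx
            exact ⟨b, Ne.symm hab, rfl⟩
          · exact (Sum.inl_ne_inr hx).elim
          · exact (Sum.inl_ne_inr hx).elim
        · rintro ⟨b, hb, rfl⟩
          exact Or.inl ⟨a, b, Ne.symm hb, Or.inr ⟨rfl, rfl⟩⟩
    | Sum.inr (Sum.inl a) =>
      rw [show G.neighborFinset (Sum.inr (Sum.inl a))
          = univ.image (fun b => Sum.inr (Sum.inr b)) from ?_]
      · rw [Finset.card_image_of_injective _ (by intro x y h; simpa using h), Finset.card_univ]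
        simp
      · ext y
        simp only [SimpleGraph.mem_neighborFinset, hadj, Finset.mem_image, Finset.mem_univ, true_and]
        constructor
        · rintro (⟨a', b, hab, ⟨hx, rfl⟩ | ⟨hx, rfl⟩⟩ | ⟨a', b, ⟨hx, rfl⟩ | ⟨hx, rfl⟩⟩)
          · exact (Sum.inr_ne_inl hx).elim
          · exact (Sum.inr_ne_inl hx).elim
          · exact ⟨b, rfl⟩
          · injection hx with hx; exact (Sum.inl_ne_inr hx).elim
        · rintro ⟨b, rfl⟩
          exact Or.inr ⟨a, b, Or.inl ⟨rfl, rfl⟩⟩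
    | Sum.inr (Sum.inr a) =>
      rw [show G.neighborFinset (Sum.inr (Sum.inr a))
          = univ.image (fun b => Sum.inr (Sum.inl b)) from ?_]
      · rw [Finset.card_image_of_injective _ (by intro x y h; simpa using h), Finset.card_univ]
        simp
      · ext y
        simp only [SimpleGraph.mem_neighborFinset, hadj, Finset.mem_image, Finset.mem_univ, true_and]
        constructor
        · rintro (⟨a', b, hab, ⟨hx, rfl⟩ | ⟨hx, rfl⟩⟩ | ⟨a', b, ⟨hx, rfl⟩ | ⟨hx, rfl⟩⟩)
          · exact (Sum.inr_ne_inl hx).elim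
          · exact (Sum.inr_ne_inl hx).elim
          · injection hx with hx; exact (Sum.inr_ne_inl hx).elim
          · exact ⟨b, rfl⟩
        · rintro ⟨b, rfl⟩
          exact Or.inr ⟨a, b, Or.inr ⟨rfl, rfl⟩⟩
  
  have hcard : G.edgeFinset.card = 2 * m * (4 * m + 1) := by
    have h := SimpleGraph.sum_degrees_eq_twice_card_edges G
    rw [Finset.sum_congr rfl (fun v _ => hdeg v), Finset.sum_const, Finset.card_univ] at h
    simp only [smul_eq_mul, Fintype.card_sum, Fintype.card_fin] at h
    apply Nat.eq_of_mul_eq_mul_left (show 0 < 2 by norm_num)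
    rw [← h]; ring
  have hdvd : 2 * k ∣ G.edgeFinset.card := by
    rw [hcard]; exact nt1' k m hk hko hm
  refine ⟨⟨Sum.elim (Sum.elim (fun _ => true) (fun _ => false))
      (Sum.elim (fun _ => true) (fun _ => false)), ?_, ?_, ?_⟩,
    fun v => ⟨hdeg v, by rw [hdeg v]; exact ⟨m, by ring⟩⟩, hdvd, hcard,
    no_decomp k m hk hko hm G hadj hcard hdvd⟩
  · intro x y hxy
    rw [hadj] at hxy
    rcases hxy with ⟨a, b, _, ⟨rfl, rfl⟩ | ⟨rfl, rfl⟩⟩ | ⟨a, b, ⟨rfl, rfl⟩ | ⟨rfl, rfl⟩⟩ <;> simp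
  · rw [filter_sum_card', filter_sum_card', filter_sum_card']
    simp
    ring
  · rw [filter_sum_card', filter_sum_card', filter_sum_card']
    simp
    ring
end

section
/- For every graph H without isolated vertices and every k ≥ 2, there exists a graph H^con on a vertex set extending V(H), edge-disjoint from H, such that H ∪ H^con is connected, H^con has a C_{2k}-decomposition, and |V(H ∪ H^con)| ≤ (2k−1)|V(H)|. -/
universe u

open SimpleGraph

namespace Stmt17Aux

lemma map_range_shift {W : Type*} (g : ℕ → W) (a c : ℕ) :
    (List.range (c + 1)).map (fun t => g (a + t)) = g a :: (List.range c).map (fun t => g (a + 1 + t)) := by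
  rw [List.range_succ_eq_map, List.map_cons, List.map_map]
  congr 1
  apply List.map_congr_left
  intro t _
  simp only [Function.comp_apply]
  congr 1
  omega

/-- A walk following `f` from `f a` with `b` steps. -/
def walkFrom {W : Type*} {G : SimpleGraph W} (f : ℕ → W)
    (h : ∀ m, G.Adj (f m) (f (m + 1))) (a : ℕ) : (b : ℕ) → G.Walk (f a) (f (a + b))
  | 0 => Walk.nil.copy rfl (congrArg f (by omega))
  | b + 1 => (Walk.cons (h a) (walkFrom f h (a + 1) b)).copy rfl (congrArg f (by omega))

lemma length_walkFrom {W : Type*} {G : SimpleGraph W} (f : ℕ → W)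
    (h : ∀ m, G.Adj (f m) (f (m + 1))) (a : ℕ) :
    ∀ b, (walkFrom f h a b).length = b
  | 0 => by simp [walkFrom]
  | b + 1 => by simp [walkFrom, length_walkFrom f h (a + 1) b]

lemma support_walkFrom {W : Type*} {G : SimpleGraph W} (f : ℕ → W)
    (h : ∀ m, G.Adj (f m) (f (m + 1))) (a : ℕ) :
    ∀ b, (walkFrom f h a b).support = (List.range (b + 1)).map (fun t => f (a + t))
  | 0 => by simp [walkFrom, List.range_succ]
  | b + 1 => by
      rw [walkFrom, Walk.support_copy, Walk.support_cons,
        support_walkFrom f h (a + 1) b]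
      conv_rhs => rw [map_range_shift f a (b + 1)]

lemma edges_walkFrom {W : Type*} {G : SimpleGraph W} (f : ℕ → W)
    (h : ∀ m, G.Adj (f m) (f (m + 1))) (a : ℕ) :
    ∀ b, (walkFrom f h a b).edges = (List.range b).map (fun t => s(f (a + t), f (a + t + 1)))
  | 0 => by simp [walkFrom]
  | b + 1 => by
      rw [walkFrom, Walk.edges_copy, Walk.edges_cons,
        edges_walkFrom f h (a + 1) b]
      conv_rhs => rw [map_range_shift (fun m => s(f m, f (m + 1))) a b]

lemma mod_cases {K a b : ℕ} (hK : 0 < K) (ha : a ≤ K) (hb : b ≤ K) (h : a % K = b % K) :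
    a = b ∨ (a = 0 ∧ b = K) ∨ (a = K ∧ b = 0) := by
  rcases eq_or_lt_of_le ha with rfl | ha' <;> rcases eq_or_lt_of_le hb with rfl | hb'
  · left; rfl
  · rw [Nat.mod_self, Nat.mod_eq_of_lt hb'] at h; omega
  · rw [Nat.mod_self, Nat.mod_eq_of_lt ha'] at h; omega
  · rw [Nat.mod_eq_of_lt ha', Nat.mod_eq_of_lt hb'] at h; omega


section
variable {V : Type*} (k N : ℕ) (e : V ≃ Fin (N + 1)) (hk : 2 ≤ k)


def c (i : Fin N) (j : ZMod (2 * k)) : V ⊕ (Fin N × Fin (2 * k - 2)) :=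
  if j.val = 0 then Sum.inl (e.symm ⟨i.1, by omega⟩)
  else if h2 : j.val = k then Sum.inl (e.symm ⟨i.1 + 1, by omega⟩)
  else if h3 : j.val < k then Sum.inr (i, ⟨j.val - 1, by omega⟩)
  else Sum.inr (i, ⟨j.val - 2, by
    haveI : NeZero (2 * k) := ⟨by omega⟩
    have := ZMod.val_lt j
    omega⟩)

lemma c_inj (i : Fin N) {j j' : ZMod (2 * k)} (h : c k N e hk i j = c k N e hk i j') :
    j = j' := by
  haveI : NeZero (2 * k) := ⟨by omega⟩
  have hval : j.val = j'.val := by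
    have hj := ZMod.val_lt j
    have hj' := ZMod.val_lt j'
    unfold c at h
    split_ifs at h <;>
      first
        | omega
        | (simp only [Sum.inl.injEq, Sum.inr.injEq, EmbeddingLike.apply_eq_iff_eq,
            Fin.mk.injEq, Prod.mk.injEq] at h; omega)
  exact ZMod.val_injective _ hval

lemma c_mod {i : Fin N} {a b : ℕ} (h : c k N e hk i ↑a = c k N e hk i ↑b) :
    a % (2 * k) = b % (2 * k) :=
  (ZMod.natCast_eq_natCast_iff' a b (2 * k)).mp (c_inj k N e hk i h)

lemma c_cases (i : Fin N) (j : ZMod (2 * k)) :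
    (∃ x, c k N e hk i j = Sum.inl x) ∨ (∃ d, c k N e hk i j = Sum.inr (i, d)) := by
  unfold c
  split_ifs <;> first | exact Or.inl ⟨_, rfl⟩ | exact Or.inr ⟨_, rfl⟩

lemma c_eval (i : Fin N) (m : ℕ) (hm : m < 2 * k) :
    c k N e hk i ↑m =
      if m = 0 then Sum.inl (e.symm ⟨i.1, by omega⟩)
      else if h2 : m = k then Sum.inl (e.symm ⟨i.1 + 1, by omega⟩)
      else if h3 : m < k then Sum.inr (i, ⟨m - 1, by omega⟩)
      else Sum.inr (i, ⟨m - 2, by omega⟩) := by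
  haveI : NeZero (2 * k) := ⟨by omega⟩
  have hv : ((m : ℕ) : ZMod (2 * k)).val = m := by
    rw [ZMod.val_natCast, Nat.mod_eq_of_lt hm]
  unfold c
  simp only [hv]

lemma c_zero (i : Fin N) : c k N e hk i ((0 : ℕ) : ZMod (2 * k)) =
    Sum.inl (e.symm ⟨i.1, by omega⟩) := by
  rw [c_eval k N e hk i 0 (by omega), if_pos rfl]

lemma c_k (i : Fin N) : c k N e hk i ((k : ℕ) : ZMod (2 * k)) =
    Sum.inl (e.symm ⟨i.1 + 1, by omega⟩) := by
  rw [c_eval k N e hk i k (by omega), if_neg (by omega), dif_pos rfl]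

lemma c_surj (i : Fin N) (d : Fin (2 * k - 2)) :
    ∃ m : ℕ, m < 2 * k ∧ c k N e hk i ↑m = Sum.inr (i, d) := by
  have hd2 := d.2
  rcases lt_or_ge d.1 (k - 1) with hd | hd
  · refine ⟨d.1 + 1, by omega, ?_⟩
    rw [c_eval k N e hk i (d.1 + 1) (by omega), if_neg (by omega), dif_neg (by omega),
      dif_pos (by omega)]
    simp only [Sum.inr.injEq, Prod.mk.injEq, true_and]
    exact Fin.ext (by simp)
  · refine ⟨d.1 + 2, by omega, ?_⟩
    rw [c_eval k N e hk i (d.1 + 2) (by omega), if_neg (by omega), dif_neg (by omega),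
      dif_neg (by omega)]
    simp only [Sum.inr.injEq, Prod.mk.injEq, true_and]
    exact Fin.ext (by simp)

lemma c_edge_inr (i : Fin N) (m : ℕ) (hm : m < 2 * k) :
    (∃ d, c k N e hk i ↑m = Sum.inr (i, d)) ∨
      (∃ d, c k N e hk i ↑(m + 1) = Sum.inr (i, d)) := by
  by_cases h0 : m = 0 ∨ m = k
  · right
    rw [c_eval k N e hk i (m + 1) (by omega)]
    split_ifs <;> first | (exfalso; omega) | exact ⟨_, rfl⟩ | exact (‹False›).elim
  · left
    rw [c_eval k N e hk i m hm]
    split_ifs <;> first | (exfalso; omega) | exact ⟨_, rfl⟩ | exact (‹False›).elim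


def conGraph : SimpleGraph (V ⊕ (Fin N × Fin (2 * k - 2))) :=
  SimpleGraph.fromRel (fun u w =>
    ∃ i : Fin N, ∃ m : ℕ, m < 2 * k ∧ u = c k N e hk i ↑m ∧ w = c k N e hk i ↑(m + 1))

lemma c_ne (i : Fin N) (m : ℕ) : c k N e hk i ↑m ≠ c k N e hk i ↑(m + 1) := by
  intro h
  have h2 := Nat.ModEq.dvd (c_mod k N e hk h)
  rw [show ((m + 1 : ℕ) : ℤ) - (m : ℤ) = 1 by push_cast; ring] at h2
  have := Int.le_of_dvd one_pos h2
  omega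

lemma adj_conGraph (i : Fin N) (m : ℕ) :
    (conGraph k N e hk).Adj (c k N e hk i ↑m) (c k N e hk i ↑(m + 1)) := by
  rw [conGraph, SimpleGraph.fromRel_adj]
  refine ⟨c_ne k N e hk i m, Or.inl ⟨i, m % (2 * k), Nat.mod_lt _ (by omega), ?_, ?_⟩⟩
  · exact congrArg (c k N e hk i) (ZMod.natCast_mod m (2 * k)).symm
  · refine congrArg (c k N e hk i) ?_
    push_cast
    rw [ZMod.natCast_mod]

def cyc (i : Fin N) :
    (conGraph k N e hk).Walk (c k N e hk i ↑(0 : ℕ)) (c k N e hk i ↑(0 : ℕ)) :=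
  (walkFrom (fun m => c k N e hk i ↑m) (adj_conGraph k N e hk i) 0 (2 * k)).copy rfl
    (congrArg (c k N e hk i) (by
      rw [Nat.zero_add, ZMod.natCast_self, Nat.cast_zero]))

lemma length_cyc (i : Fin N) : (cyc k N e hk i).length = 2 * k := by
  rw [cyc, Walk.length_copy, length_walkFrom]

lemma edges_cyc (i : Fin N) : (cyc k N e hk i).edges =
    (List.range (2 * k)).map (fun t : ℕ => s(c k N e hk i ↑t, c k N e hk i ↑(t + 1))) := by
  rw [cyc, Walk.edges_copy, edges_walkFrom]
  apply List.map_congr_left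
  intro t _
  norm_num

lemma support_cyc (i : Fin N) : (cyc k N e hk i).support =
    (List.range (2 * k + 1)).map (fun t : ℕ => c k N e hk i ↑t) := by
  rw [cyc, Walk.support_copy, support_walkFrom]
  apply List.map_congr_left
  intro t _
  norm_num

lemma isCycle_cyc (i : Fin N) : (cyc k N e hk i).IsCycle := by
  refine ⟨⟨⟨?_⟩, ?_⟩, ?_⟩
  · -- edges nodup
    rw [edges_cyc]
    refine List.Nodup.map_on ?_ List.nodup_range
    intro t ht t' ht' hEq
    rw [List.mem_range] at ht ht'
    rcases Sym2.eq_iff.mp hEq with ⟨h1, h2⟩ | ⟨h1, h2⟩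
    · have A := mod_cases (show 0 < 2 * k by omega) (le_of_lt ht) (le_of_lt ht')
        (c_mod k N e hk h1)
      omega
    · have A := mod_cases (show 0 < 2 * k by omega) (le_of_lt ht) (by omega)
        (c_mod k N e hk h1)
      have B := mod_cases (show 0 < 2 * k by omega) (by omega : t + 1 ≤ 2 * k) (le_of_lt ht')
        (c_mod k N e hk h2)
      omega
  · -- not nil
    have hl := length_cyc k N e hk i
    intro hnil
    rw [hnil, Walk.length_nil] at hl
    omega
  · -- support tail nodup
    rw [support_cyc, List.range_succ_eq_map, List.map_cons, List.tail_cons, List.map_map]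
    refine List.Nodup.map_on ?_ List.nodup_range
    intro t ht t' ht' hEq
    rw [List.mem_range] at ht ht'
    simp only [Function.comp_apply] at hEq
    have A := mod_cases (show 0 < 2 * k by omega) (by omega : t + 1 ≤ 2 * k)
      (by omega : t' + 1 ≤ 2 * k) (c_mod k N e hk hEq)
    omega

lemma exists_inr_mem {i : Fin N} {ed : Sym2 (V ⊕ (Fin N × Fin (2 * k - 2)))}
    (h : ed ∈ (cyc k N e hk i).edges) : ∃ d, Sum.inr (i, d) ∈ ed := by
  rw [edges_cyc] at h
  obtain ⟨m, hm, rfl⟩ := List.mem_map.mp h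
  rw [List.mem_range] at hm
  rcases c_edge_inr k N e hk i m hm with ⟨d, hd⟩ | ⟨d, hd⟩
  · exact ⟨d, by rw [← hd]; exact Sym2.mem_mk_left _ _⟩
  · exact ⟨d, by rw [← hd]; exact Sym2.mem_mk_right _ _⟩

lemma c_eq_c {i i' : Fin N} {j j' : ZMod (2 * k)} (hne : i ≠ i')
    (h : c k N e hk i j = c k N e hk i' j') : ∃ x, c k N e hk i j = Sum.inl x := by
  rcases c_cases k N e hk i j with h1 | ⟨d, h1⟩
  · exact h1
  · rcases c_cases k N e hk i' j' with ⟨x, h2⟩ | ⟨d', h2⟩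
    · rw [h1, h2] at h; exact absurd h (by simp)
    · rw [h1, h2] at h
      simp only [Sum.inr.injEq, Prod.mk.injEq] at h
      exact absurd h.1 hne

lemma edges_cyc_disjoint {i i' : Fin N} (hne : i ≠ i') :
    ((cyc k N e hk i).edges).Disjoint ((cyc k N e hk i').edges) := by
  intro ed h1 h2
  rw [edges_cyc] at h1 h2
  obtain ⟨m, hm, rfl⟩ := List.mem_map.mp h1
  obtain ⟨m', hm', hEq⟩ := List.mem_map.mp h2
  rw [List.mem_range] at hm hm'
  obtain ⟨x1, hx1⟩ : ∃ x, c k N e hk i ↑m = Sum.inl x := by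
    rcases Sym2.eq_iff.mp hEq with ⟨hA, hB⟩ | ⟨hA, hB⟩
    · exact c_eq_c k N e hk hne hA.symm
    · exact c_eq_c k N e hk hne hB.symm
  obtain ⟨x2, hx2⟩ : ∃ x, c k N e hk i ↑(m + 1) = Sum.inl x := by
    rcases Sym2.eq_iff.mp hEq with ⟨hA, hB⟩ | ⟨hA, hB⟩
    · exact c_eq_c k N e hk hne hB.symm
    · exact c_eq_c k N e hk hne hA.symm
  rcases c_edge_inr k N e hk i m hm with ⟨d, hd⟩ | ⟨d, hd⟩
  · rw [hx1] at hd; exact absurd hd (by simp)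
  · rw [hx2] at hd; exact absurd hd (by simp)

lemma edgeSet_conGraph (ed : Sym2 (V ⊕ (Fin N × Fin (2 * k - 2)))) :
    ed ∈ (conGraph k N e hk).edgeSet ↔ ∃ i : Fin N, ed ∈ (cyc k N e hk i).edges := by
  induction ed using Sym2.ind with
  | _ u w =>
    constructor
    · intro h
      rw [SimpleGraph.mem_edgeSet, conGraph, SimpleGraph.fromRel_adj] at h
      obtain ⟨hne, h | h⟩ := h <;> obtain ⟨i, m, hm, hu, hw⟩ := h
      · refine ⟨i, ?_⟩
        rw [edges_cyc, hu, hw]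
        exact List.mem_map.mpr ⟨m, List.mem_range.mpr hm, rfl⟩
      · refine ⟨i, ?_⟩
        rw [edges_cyc, hu, hw, Sym2.eq_swap]
        exact List.mem_map.mpr ⟨m, List.mem_range.mpr hm, rfl⟩
    · rintro ⟨i, h⟩
      exact (cyc k N e hk i).edges_subset_edgeSet h

lemma conGraph_preconnected : (conGraph k N e hk).Preconnected := by
  have hreach1 : ∀ (i : Fin N) (m : ℕ),
      (conGraph k N e hk).Reachable (c k N e hk i ↑(0 : ℕ)) (c k N e hk i ↑m) := by
    intro i m
    induction m with
    | zero => exact Reachable.refl _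
    | succ m ih => exact ih.trans (adj_conGraph k N e hk i m).reachable
  have hreachV : ∀ t : ℕ, ∀ ht : t < N + 1,
      (conGraph k N e hk).Reachable (Sum.inl (e.symm ⟨0, by omega⟩))
        (Sum.inl (e.symm ⟨t, ht⟩)) := by
    intro t
    induction t with
    | zero => intro ht; exact Reachable.refl _
    | succ t ih =>
      intro ht
      have hti : t < N := by omega
      refine (ih (by omega)).trans ?_
      have h0 := c_zero k N e hk ⟨t, hti⟩
      have hkk := c_k k N e hk ⟨t, hti⟩
      rw [← h0, ← hkk]
      exact hreach1 ⟨t, hti⟩ k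
  have hbase : ∀ w, (conGraph k N e hk).Reachable (Sum.inl (e.symm ⟨0, by omega⟩)) w := by
    intro w
    rcases w with x | ⟨i, d⟩
    · have hx : Sum.inl x = (Sum.inl (e.symm ⟨(e x).1, (e x).2⟩) :
          V ⊕ (Fin N × Fin (2 * k - 2))) := by simp
      rw [hx]
      exact hreachV (e x).1 (e x).2
    · obtain ⟨m, hm, hcm⟩ := c_surj k N e hk i d
      have hr := hreach1 i m
      rw [hcm] at hr
      refine Reachable.trans ?_ hr
      rw [c_zero k N e hk i]
      exact hreachV i.1 (by omega)
  intro u v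
  exact (hbase u).symm.trans (hbase v)

end
end Stmt17Aux

/-- For every graph `H` without isolated vertices and every `k ≥ 2`, there is a
`C_{2k}`-connector for `H`: a graph `Hcon` on a vertex set `W` extending `V(H)`,
edge-disjoint from (the copy of) `H`, such that `H ∪ Hcon` is connected, `Hcon` has a
`C_{2k}`-decomposition, and `|V(H ∪ Hcon)| ≤ (2k-1)|V(H)|`. -/
theorem stmt_17 {V : Type u} [Fintype V] (H : SimpleGraph V)
    (hiso : ∀ v : V, ∃ u : V, H.Adj v u) (k : ℕ) (hk : 2 ≤ k) :
    ∃ (W : Type u) (_ : Fintype W) (ι : V ↪ W) (Hcon : SimpleGraph W),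
      Disjoint (H.map ι).edgeSet Hcon.edgeSet ∧
      ((H.map ι) ⊔ Hcon).Preconnected ∧
      Hcon.HasCycleDecomp (2 * k) ∧
      Fintype.card W ≤ (2 * k - 1) * Fintype.card V := by
  classical
  by_cases hsmall : Fintype.card V ≤ 1
  · refine ⟨V, inferInstance, Function.Embedding.refl V, ⊥, by simp, ?_, ?_, ?_⟩
    · intro u v
      haveI := Fintype.card_le_one_iff_subsingleton.mp hsmall
      rw [Subsingleton.elim u v]
    · exact ⟨[], by simp, by simp, by simp⟩
    · calc Fintype.card V = 1 * Fintype.card V := (one_mul _).symm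
        _ ≤ (2 * k - 1) * Fintype.card V := Nat.mul_le_mul_right _ (by omega)
  · obtain ⟨N, hN⟩ : ∃ N, Fintype.card V = N + 1 := ⟨Fintype.card V - 1, by omega⟩
    let e : V ≃ Fin (N + 1) := (Fintype.equivFin V).trans (finCongr hN)
    refine ⟨V ⊕ (Fin N × Fin (2 * k - 2)), inferInstance, ⟨Sum.inl, Sum.inl_injective⟩,
      Stmt17Aux.conGraph k N e hk, ?_, ?_, ?_, ?_⟩
    · -- edge-disjointness
      rw [Set.disjoint_left]
      intro ed hmap hcon
      obtain ⟨i, hmem⟩ := (Stmt17Aux.edgeSet_conGraph k N e hk ed).mp hcon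
      obtain ⟨d, hd⟩ := Stmt17Aux.exists_inr_mem k N e hk hmem
      induction ed using Sym2.ind with
      | _ u w =>
        rw [SimpleGraph.mem_edgeSet, SimpleGraph.map_adj] at hmap
        obtain ⟨a, b, -, ha, hb⟩ := hmap
        simp only [Function.Embedding.coeFn_mk] at ha hb
        rw [← ha, ← hb, Sym2.mem_iff] at hd
        rcases hd with hd | hd <;> exact absurd hd (by simp)
    · -- preconnected
      exact (Stmt17Aux.conGraph_preconnected k N e hk).mono le_sup_right
    · -- cycle decomposition
      refine ⟨(List.finRange N).map
        (fun i => ⟨Stmt17Aux.c k N e hk i ↑(0 : ℕ), Stmt17Aux.cyc k N e hk i⟩), ?_, ?_, ?_⟩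
      · intro p hp
        obtain ⟨i, -, rfl⟩ := List.mem_map.mp hp
        exact ⟨Stmt17Aux.isCycle_cyc k N e hk i, Stmt17Aux.length_cyc k N e hk i⟩
      · rw [List.pairwise_map]
        refine List.Pairwise.imp ?_ (List.nodup_finRange N)
        intro i i' hne
        exact Stmt17Aux.edges_cyc_disjoint k N e hk hne
      · intro ed
        rw [Stmt17Aux.edgeSet_conGraph k N e hk ed]
        constructor
        · rintro ⟨i, h⟩
          exact ⟨⟨Stmt17Aux.c k N e hk i ↑(0 : ℕ), Stmt17Aux.cyc k N e hk i⟩,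
            List.mem_map.mpr ⟨i, List.mem_finRange i, rfl⟩, h⟩
        · rintro ⟨p, hp, h⟩
          obtain ⟨i, -, rfl⟩ := List.mem_map.mp hp
          exact ⟨i, h⟩
    · -- cardinality
      rw [Fintype.card_sum, Fintype.card_prod, Fintype.card_fin, Fintype.card_fin, hN]
      obtain ⟨m, rfl⟩ : ∃ m, k = m + 2 := ⟨k - 2, by omega⟩
      have h1 : 2 * (m + 2) - 2 = 2 * m + 2 := by omega
      have h2 : 2 * (m + 2) - 1 = 2 * m + 3 := by omega
      rw [h1, h2]
      nlinarith [Nat.zero_le (N * m)]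
end

section
/- Let X have a hypergeometric distribution with parameters N, n, m (i.e., X = |S ∩ {1,…,m}| for a uniformly random n-subset S of {1,…,N}). Then for every t ≥ 0, P(|X − E[X]| ≥ t) ≤ 2·exp(−2t²/n). -/
open Finset Real

section helpers

open Finset

lemma sum_pow_const (b : ℝ) (n : ℕ) :
    ∑ i ∈ range (n+1), b ^ i * b ^ (n - i) = (n+1 : ℝ) * b ^ n := by
  rw [Finset.sum_congr rfl (g := fun _ => b ^ n) fun i hi => ?_]
  · rw [Finset.sum_const, card_range, nsmul_eq_mul]; push_cast; ring
  · rw [← pow_add]; congr 1; rw [mem_range] at hi; omega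

lemma pow_tangent (a b : ℝ) (ha : 0 ≤ a) (hb : 0 ≤ b) (n : ℕ) :
    b ^ (n+1) + (n+1) * b ^ n * (a - b) ≤ a ^ (n+1) := by
  have key : (a - b) * (∑ i ∈ range (n+1), a ^ i * b ^ (n - i)) = a^(n+1) - b^(n+1) := by
    have h := geom_sum₂_mul a b (n+1)
    simp only [Nat.add_sub_cancel] at h
    rw [mul_comm]; exact h
  rcases le_total b a with h | h
  · have hsum : (n+1 : ℝ) * b ^ n ≤ ∑ i ∈ range (n+1), a ^ i * b ^ (n - i) := by
      rw [← sum_pow_const b n]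
      exact Finset.sum_le_sum fun i _ => by gcongr
    nlinarith [mul_le_mul_of_nonneg_left hsum (sub_nonneg.2 h)]
  · have hsum : (∑ i ∈ range (n+1), a ^ i * b ^ (n - i)) ≤ (n+1 : ℝ) * b ^ n := by
      rw [← sum_pow_const b n]
      exact Finset.sum_le_sum fun i _ => by gcongr
    nlinarith [mul_le_mul_of_nonpos_left hsum (sub_nonpos.2 h)]

lemma maclaurin {ι : Type*} [DecidableEq ι] (s : Finset ι) (a : ι → ℝ)
    (ha : ∀ i ∈ s, 0 ≤ a i) :
    ∀ n : ℕ, ∑ S ∈ s.powersetCard n, ∏ i ∈ S, a i ≤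
      (s.card.choose n : ℝ) * ((∑ i ∈ s, a i) / s.card) ^ n := by
  induction s using Finset.cons_induction with
  | empty =>
      intro n
      match n with
      | 0 => simp
      | n+1 =>
        rw [show (Finset.powersetCard (n+1) (∅:Finset ι)) = ∅ from
          Finset.powersetCard_eq_empty.2 (by simp)]
        simp
  | cons x s hx ih =>
    intro n
    have hax : 0 ≤ a x := ha x (Finset.mem_cons_self x s)
    have ha' : ∀ i ∈ s, 0 ≤ a i := fun i hi => ha i (Finset.mem_cons_of_mem hi)
    match n with
    | 0 => simp
    | n+1 =>
      set N := s.card with hN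
      set T := ∑ i ∈ s, a i with hT
      have hT0 : 0 ≤ T := Finset.sum_nonneg ha'
      set c' : ℝ := T / N with hc'
      have hc'0 : 0 ≤ c' := div_nonneg hT0 (Nat.cast_nonneg N)
      set c : ℝ := (T + a x) / (N + 1) with hc
      have hc0 : 0 ≤ c := div_nonneg (by linarith) (by positivity)
      have hNc' : (N : ℝ) * c' = T := by
        rcases Nat.eq_zero_or_pos N with h0 | h0
        · have hs : s = ∅ := Finset.card_eq_zero.1 h0
          simp [hs, hc', hT, h0]
        · rw [hc', mul_div_cancel₀]
          exact Nat.cast_ne_zero.2 h0.ne'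
      have hcard : (Finset.cons x s hx).card = N + 1 := Finset.card_cons hx
      have hsum : ∑ i ∈ Finset.cons x s hx, a i = a x + T := Finset.sum_cons hx
      have hsplit : ∑ S ∈ (Finset.cons x s hx).powersetCard (n+1), ∏ i ∈ S, a i =
          (∑ S ∈ s.powersetCard (n+1), ∏ i ∈ S, a i) +
          a x * ∑ S ∈ s.powersetCard n, ∏ i ∈ S, a i := by
        rw [Finset.cons_eq_insert, Finset.powersetCard_succ_insert hx, Finset.sum_union,
          Finset.sum_image]
        · congr 1
          rw [Finset.mul_sum]
          refine Finset.sum_congr rfl fun S hS => ?_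
          have hxS : x ∉ S := fun hmem => hx ((Finset.mem_powersetCard.1 hS).1 hmem)
          rw [Finset.prod_insert hxS]
        · intro S1 h1 S2 h2 he
          have hx1 : x ∉ S1 := fun hmem => hx ((Finset.mem_powersetCard.1 h1).1 hmem)
          have hx2 : x ∉ S2 := fun hmem => hx ((Finset.mem_powersetCard.1 h2).1 hmem)
          rw [← Finset.erase_insert hx1, ← Finset.erase_insert hx2, he]
        · rw [Finset.disjoint_right]
          intro S hS hS'
          rw [Finset.mem_image] at hS
          obtain ⟨S', -, rfl⟩ := hS
          exact hx ((Finset.mem_powersetCard.1 hS').1 (Finset.mem_insert_self x S'))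
      rw [hsplit, hcard, hsum]
      have i1 := ih ha' (n+1)
      have i2 := ih ha' n
      have hcast : ((N+1 : ℕ):ℝ) = (N:ℝ)+1 := by push_cast; ring
      have hc2 : (a x + T)/(((N+1):ℕ):ℝ) = c := by rw [hc, hcast]; ring
      rw [hc2]
      rcases Nat.lt_or_ge N n with hlt | hle
      · have h1 : N.choose (n+1) = 0 := Nat.choose_eq_zero_of_lt (by omega)
        have h2 : N.choose n = 0 := Nat.choose_eq_zero_of_lt (by omega)
        have h3 : (N+1).choose (n+1) = 0 := Nat.choose_eq_zero_of_lt (by omega)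
        rw [h1] at i1; rw [h2] at i2; rw [h3]
        simp only [Nat.cast_zero, zero_mul] at i1 i2 ⊢
        nlinarith [mul_le_mul_of_nonneg_left i2 hax]
      · have key : ((N:ℝ) - n) * c' ^ (n+1) + ((n:ℝ)+1) * (a x) * c' ^ n
            ≤ ((N:ℝ)+1) * c ^ (n+1) := by
          have ht' := pow_tangent c c' hc0 hc'0 n
          have h3 : ((N:ℝ)+1)*c = (N:ℝ)*c' + a x := by
            rw [hc]
            field_simp
            linarith [hNc']
          have h1 := mul_le_mul_of_nonneg_left ht' (by positivity : (0:ℝ) ≤ (N:ℝ)+1)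
          have h2 : ((N:ℝ)+1)*(c'^(n+1) + ((n:ℝ)+1)*c'^n*(c-c'))
              = ((N:ℝ) - n)*c'^(n+1) + ((n:ℝ)+1)*(a x)*c'^n := by
            calc ((N:ℝ)+1)*(c'^(n+1) + ((n:ℝ)+1)*c'^n*(c-c'))
                = ((N:ℝ)+1)*c'^(n+1) + ((n:ℝ)+1)*c'^n*(((N:ℝ)+1)*c)
                  - ((n:ℝ)+1)*c'^n*(((N:ℝ)+1)*c') := by ring
              _ = ((N:ℝ)+1)*c'^(n+1) + ((n:ℝ)+1)*c'^n*((N:ℝ)*c' + a x)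
                  - ((n:ℝ)+1)*c'^n*(((N:ℝ)+1)*c') := by rw [h3]
              _ = ((N:ℝ) - n)*c'^(n+1) + ((n:ℝ)+1)*(a x)*c'^n := by ring
          push_cast at h1
          rw [h2] at h1
          exact h1
        have hD0 : (0:ℝ) ≤ ((N+1).choose (n+1) : ℝ) := Nat.cast_nonneg _
        have hD : ((N+1).choose (n+1) : ℝ) = (N.choose n : ℝ) + (N.choose (n+1) : ℝ) := by
          rw [Nat.choose_succ_succ]
          push_cast
          ring
        have hB : ((N:ℝ)+1) * (N.choose n : ℝ) = ((N+1).choose (n+1) : ℝ) * ((n:ℝ)+1) := by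
          have h := Nat.add_one_mul_choose_eq N n
          have h' : ((N+1) * N.choose n : ℕ) = ((N+1).choose (n+1) * (n+1) : ℕ) := h
          exact_mod_cast congrArg (Nat.cast : ℕ → ℝ) h'
        have hA : ((N:ℝ)+1) * (N.choose (n+1) : ℝ)
            = ((N:ℝ) - n) * ((N+1).choose (n+1) : ℝ) := by
          nlinarith [hD, hB]
        have step1 : (∑ S ∈ s.powersetCard (n+1), ∏ i ∈ S, a i)
            + a x * ∑ S ∈ s.powersetCard n, ∏ i ∈ S, a i
            ≤ (N.choose (n+1) : ℝ) * c'^(n+1) + a x * ((N.choose n : ℝ) * c'^n) :=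
          add_le_add i1 (mul_le_mul_of_nonneg_left i2 hax)
        have step2 : ((N:ℝ)+1) * ((N.choose (n+1) : ℝ) * c'^(n+1)
              + a x * ((N.choose n : ℝ) * c'^n))
            ≤ ((N:ℝ)+1) * (((N+1).choose (n+1) : ℝ) * c^(n+1)) := by
          calc ((N:ℝ)+1) * ((N.choose (n+1) : ℝ) * c'^(n+1) + a x * ((N.choose n : ℝ) * c'^n))
              = (((N:ℝ)+1) * (N.choose (n+1) : ℝ)) * c'^(n+1)
                + a x * ((((N:ℝ)+1) * (N.choose n : ℝ)) * c'^n) := by ring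
            _ = (((N:ℝ) - n) * ((N+1).choose (n+1) : ℝ)) * c'^(n+1)
                + a x * ((((N+1).choose (n+1) : ℝ) * ((n:ℝ)+1)) * c'^n) := by rw [hA, hB]
            _ = ((N+1).choose (n+1) : ℝ) * (((N:ℝ) - n) * c'^(n+1)
                + ((n:ℝ)+1) * (a x) * c'^n) := by ring
            _ ≤ ((N+1).choose (n+1) : ℝ) * (((N:ℝ)+1) * c^(n+1)) :=
                mul_le_mul_of_nonneg_left key hD0
            _ = ((N:ℝ)+1) * (((N+1).choose (n+1) : ℝ) * c^(n+1)) := by ring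
        have step3 := le_of_mul_le_mul_left
          (le_trans (mul_le_mul_of_nonneg_left step1 (by positivity : (0:ℝ) ≤ (N:ℝ)+1)) step2)
          (by positivity : (0:ℝ) < (N:ℝ)+1)
        exact step3

open Real

lemma hoeffding_core (p : ℝ) (hp0 : 0 ≤ p) (hp1 : p ≤ 1) (s : ℝ) :
    1 - p + p * Real.exp s ≤ Real.exp (p * s + s^2 / 8) := by
  set g : ℝ → ℝ := fun u => 1 - p + p * Real.exp u with hgdef
  have hg : ∀ u, 0 < g u := fun u => by
    have h := Real.exp_pos u
    simp only [hgdef]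
    rcases lt_or_eq_of_le hp1 with h1 | h1
    · nlinarith
    · rw [← h1]; nlinarith
  set f : ℝ → ℝ := fun u => p * u + u^2/8 - Real.log (g u) with hfdef
  set f' : ℝ → ℝ := fun u => p + u/4 - p * Real.exp u / g u with hf'def
  have hgder : ∀ u, HasDerivAt g (p * Real.exp u) u := fun u =>
    ((Real.hasDerivAt_exp u).const_mul p).const_add (1 - p)
  have hder : ∀ u, HasDerivAt f (f' u) u := by
    intro u
    have h1 : HasDerivAt (fun v : ℝ => p * v + v^2/8) (p + u/4) u := by
      have := ((hasDerivAt_id u).const_mul p).add ((hasDerivAt_pow 2 u).div_const 8)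
      refine this.congr_deriv ?_
      simp
      ring
    have h2 : HasDerivAt (fun v => Real.log (g v)) (p * Real.exp u / g u) u :=
      (hgder u).log (hg u).ne'
    exact h1.sub h2
  have hder' : ∀ u, HasDerivAt f'
      (1/4 - (p * Real.exp u * g u - p * Real.exp u * (p * Real.exp u)) / (g u)^2) u := by
    intro u
    have h1 : HasDerivAt (fun v : ℝ => p + v/4) (1/4) u := by
      have := (hasDerivAt_id u).div_const 4
      exact this.const_add p
    have h2 : HasDerivAt (fun v => p * Real.exp v / g v)
        ((p * Real.exp u * g u - p * Real.exp u * (p * Real.exp u)) / (g u)^2) u :=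
      ((Real.hasDerivAt_exp u).const_mul p).div (hgder u) (hg u).ne'
    exact h1.sub h2
  have hf''nonneg : ∀ u, 0 ≤ 1/4 -
      (p * Real.exp u * g u - p * Real.exp u * (p * Real.exp u)) / (g u)^2 := by
    intro u
    rw [sub_nonneg, div_le_iff₀ (pow_pos (hg u) 2)]
    have hgu : g u = 1 - p + p * Real.exp u := rfl
    nlinarith [sq_nonneg ((1 - p) - p * Real.exp u), Real.exp_pos u]
  have hf'mono : Monotone f' :=
    monotone_of_deriv_nonneg (fun u => (hder' u).differentiableAt)
      (fun u => (hder' u).deriv ▸ hf''nonneg u)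
  have hf'0 : f' 0 = 0 := by
    simp only [hf'def, hgdef]
    simp [Real.exp_zero]
  have hfdiff : Differentiable ℝ f := fun u => (hder u).differentiableAt
  have hf0 : f 0 = 0 := by
    simp only [hfdef, hgdef]
    simp [Real.exp_zero]
  have hfnonneg : ∀ u, 0 ≤ f u := by
    intro u
    rcases le_total 0 u with h | h
    · have hmono : MonotoneOn f (Set.Ici 0) := by
        apply monotoneOn_of_deriv_nonneg (convex_Ici 0) hfdiff.continuous.continuousOn
          (hfdiff.differentiableOn)
        intro x hx
        rw [(hder x).deriv, ← hf'0]
        exact hf'mono (le_of_lt (by simpa using hx))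
      have := hmono (Set.self_mem_Ici) (Set.mem_Ici.2 h) h
      linarith [hf0 ▸ this]
    · have hanti : AntitoneOn f (Set.Iic 0) := by
        apply antitoneOn_of_deriv_nonpos (convex_Iic 0) hfdiff.continuous.continuousOn
          (hfdiff.differentiableOn)
        intro x hx
        rw [(hder x).deriv, ← hf'0]
        exact hf'mono (le_of_lt (by simpa using hx))
      have := hanti (Set.mem_Iic.2 h) (Set.self_mem_Iic) h
      linarith [hf0 ▸ this]
  have h := hfnonneg s
  have hlog : Real.log (g s) ≤ p * s + s^2/8 := by
    simp only [hfdef] at h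
    linarith
  calc 1 - p + p * Real.exp s = g s := rfl
    _ = Real.exp (Real.log (g s)) := (Real.exp_log (hg s)).symm
    _ ≤ Real.exp (p * s + s^2/8) := Real.exp_le_exp.2 hlog
lemma card_filter_lt_fin (N m : ℕ) (hm : m ≤ N) :
    ((Finset.univ : Finset (Fin N)).filter fun i : Fin N => i.val < m).card = m := by
  have : ((Finset.univ : Finset (Fin N)).filter fun i : Fin N => i.val < m)
      = (Finset.univ : Finset (Fin m)).map (Fin.castLEEmb hm) := by
    ext i
    simp only [Finset.mem_filter, Finset.mem_univ, true_and, Finset.mem_map,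
      Fin.castLEEmb, Function.Embedding.coeFn_mk]
    constructor
    · intro h
      exact ⟨⟨i.val, h⟩, rfl⟩
    · rintro ⟨j, rfl⟩
      exact j.isLt
  rw [this, Finset.card_map, Finset.card_univ, Fintype.card_fin]

lemma mgf_bound (N n m : ℕ) (hm : m ≤ N) (hN : 0 < N) (x : ℝ) (hx : 0 ≤ x) :
    ∑ S ∈ (Finset.univ : Finset (Fin N)).powersetCard n,
      x ^ (S.filter fun i : Fin N => i.val < m).card ≤
    (N.choose n : ℝ) * ((1 - (m:ℝ)/N) + ((m:ℝ)/N) * x) ^ n := by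
  have h := maclaurin (Finset.univ : Finset (Fin N))
    (fun i => if i.val < m then x else 1)
    (fun i _ => by beta_reduce; split <;> norm_num [hx]) n
  have hprod : ∀ S : Finset (Fin N),
      (∏ i ∈ S, if i.val < m then x else 1) = x ^ (S.filter fun i : Fin N => i.val < m).card := by
    intro S
    rw [Finset.prod_ite, Finset.prod_const, Finset.prod_const_one, mul_one]
  have hsum : (∑ i : Fin N, if i.val < m then x else (1:ℝ)) = m * x + ((N:ℝ) - m) := by
    rw [Finset.sum_ite, Finset.sum_const, Finset.sum_const, card_filter_lt_fin N m hm]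
    have hcompl : ((Finset.univ : Finset (Fin N)).filter fun i : Fin N => ¬ i.val < m).card
        = N - m := by
      have := Finset.card_filter_add_card_filter_not
        (s := (Finset.univ : Finset (Fin N))) (p := fun i : Fin N => i.val < m)
      rw [Finset.card_univ, Fintype.card_fin, card_filter_lt_fin N m hm] at this
      omega
    rw [hcompl, nsmul_eq_mul, nsmul_eq_mul, mul_one, Nat.cast_sub hm]
  have hcard : (Finset.univ : Finset (Fin N)).card = N := by
    rw [Finset.card_univ, Fintype.card_fin]
  rw [hcard, hsum] at h
  have hbase : ((m:ℝ) * x + ((N:ℝ) - m)) / N = (1 - (m:ℝ)/N) + ((m:ℝ)/N) * x := by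
    field_simp
    ring
  rw [hbase] at h
  calc ∑ S ∈ (Finset.univ : Finset (Fin N)).powersetCard n,
        x ^ (S.filter fun i : Fin N => i.val < m).card
      = ∑ S ∈ (Finset.univ : Finset (Fin N)).powersetCard n,
        ∏ i ∈ S, if i.val < m then x else 1 :=
        Finset.sum_congr rfl fun S _ => (hprod S).symm
    _ ≤ _ := h

-- generic Chernoff counting step
lemma count_exp_le {α : Type*} (B : Finset α) (g : α → ℝ) (θ : ℝ)
    (bound : ℝ) (hb : ∑ a ∈ B, Real.exp (g a) ≤ bound) :
    ((B.filter fun a => θ ≤ g a).card : ℝ) * Real.exp θ ≤ bound := by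
  calc ((B.filter fun a => θ ≤ g a).card : ℝ) * Real.exp θ
      = ∑ _a ∈ B.filter fun a => θ ≤ g a, Real.exp θ := by
        rw [Finset.sum_const, nsmul_eq_mul]
    _ ≤ ∑ a ∈ B.filter fun a => θ ≤ g a, Real.exp (g a) :=
        Finset.sum_le_sum fun a ha => Real.exp_le_exp.2 (Finset.mem_filter.1 ha).2
    _ ≤ ∑ a ∈ B, Real.exp (g a) :=
        Finset.sum_le_sum_of_subset_of_nonneg (Finset.filter_subset _ _)
          (fun a _ _ => (Real.exp_pos _).le)
    _ ≤ bound := hb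

end helpers

/-- Hoeffding's inequality for the hypergeometric distribution with parameters `N`, `n`,
`m`: if `S` is a uniformly random `n`-subset of `{1, …, N}` and `X = |S ∩ {1, …, m}|`,
then `P(|X - E[X]| ≥ t) ≤ 2 exp(-2t²/n)`, where `E[X] = nm/N`. Formulated by counting:
the number of `n`-subsets `S` with `||S ∩ {1,…,m}| - nm/N| ≥ t` is at most
`2 exp(-2t²/n)` times the total number of `n`-subsets. -/
theorem stmt_18 (N n m : ℕ) (hn : n ≤ N) (hm : m ≤ N) (t : ℝ) (ht : 0 ≤ t) :
    ((((Finset.univ : Finset (Fin N)).powersetCard n).filter fun S =>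
        t ≤ |((S.filter fun i : Fin N => i.val < m).card : ℝ) -
              (n : ℝ) * m / N|).card : ℝ) ≤
      2 * Real.exp (-2 * t ^ 2 / n) *
        (((Finset.univ : Finset (Fin N)).powersetCard n).card : ℝ) := by
  classical
  set B := (Finset.univ : Finset (Fin N)).powersetCard n with hB
  set f : Finset (Fin N) → ℝ := fun S => ((S.filter fun i : Fin N => i.val < m).card : ℝ)
    with hf
  rcases Nat.eq_zero_or_pos n with hn0 | hnpos
  · -- n = 0
    subst hn0
    have key : ∀ X : Finset (Finset (Fin N)), X ⊆ B →
        (X.card : ℝ) ≤ 2 * Real.exp (-2 * t ^ 2 / ((0:ℕ):ℝ)) * (B.card : ℝ) := by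
      intro X hX
      have he : Real.exp (-2 * t ^ 2 / ((0:ℕ):ℝ)) = 1 := by norm_num
      rw [he]
      have hc : (X.card : ℝ) ≤ (B.card : ℝ) := by exact_mod_cast Finset.card_le_card hX
      linarith
    exact key _ (Finset.filter_subset _ _)
  · have hN : 0 < N := lt_of_lt_of_le hnpos hn
    set p : ℝ := (m:ℝ)/N with hp
    have hp0 : 0 ≤ p := by positivity
    have hp1 : p ≤ 1 := by
      rw [hp, div_le_one (by positivity)]
      exact_mod_cast hm
    set μ : ℝ := (n:ℝ) * m / N with hμ
    have hμp : μ = (n:ℝ) * p := by rw [hμ, hp]; ring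
    set s₀ : ℝ := 4 * t / n with hs₀
    have hs₀0 : 0 ≤ s₀ := by positivity
    have hCn : (0:ℝ) ≤ (N.choose n : ℝ) := Nat.cast_nonneg _
    -- the mgf bound specialized
    have hmain : ∀ s : ℝ, ∑ S ∈ B, Real.exp (s * f S) ≤
        (N.choose n : ℝ) * Real.exp ((n:ℝ) * (p * s + s^2/8)) := by
      intro s
      have h1 : ∑ S ∈ B, Real.exp (s * f S) = ∑ S ∈ B, (Real.exp s) ^
          (S.filter fun i : Fin N => i.val < m).card := by
        refine Finset.sum_congr rfl fun S _ => ?_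
        rw [← Real.exp_nat_mul, hf]
        ring_nf
      rw [h1]
      have h2 := mgf_bound N n m hm hN (Real.exp s) (Real.exp_pos s).le
      have h3 : ((1 - p) + p * Real.exp s) ^ n ≤ Real.exp ((n:ℝ) * (p * s + s^2/8)) := by
        have hc := hoeffding_core p hp0 hp1 s
        have hnn : 0 ≤ 1 - p + p * Real.exp s := by nlinarith [Real.exp_pos s]
        calc ((1 - p) + p * Real.exp s) ^ n ≤ (Real.exp (p * s + s^2/8)) ^ n :=
              pow_le_pow_left₀ hnn hc n
          _ = Real.exp ((n:ℝ) * (p * s + s^2/8)) := by rw [← Real.exp_nat_mul]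
      calc ∑ S ∈ B, (Real.exp s) ^ (S.filter fun i : Fin N => i.val < m).card
          ≤ (N.choose n : ℝ) * ((1 - p) + p * Real.exp s) ^ n := h2
        _ ≤ (N.choose n : ℝ) * Real.exp ((n:ℝ) * (p * s + s^2/8)) := by
            exact mul_le_mul_of_nonneg_left h3 hCn
    -- upper tail
    have hup : ((B.filter fun S => μ + t ≤ f S).card : ℝ) ≤
        (N.choose n : ℝ) * Real.exp (-2 * t^2 / n) := by
      have h1 : ((B.filter fun S => s₀ * (μ + t) ≤ s₀ * f S).card : ℝ) * Real.exp (s₀ * (μ + t))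
          ≤ (N.choose n : ℝ) * Real.exp ((n:ℝ) * (p * s₀ + s₀^2/8)) :=
        count_exp_le B (fun S => s₀ * f S) (s₀ * (μ + t)) _ (hmain s₀)
      have hsub : (B.filter fun S => μ + t ≤ f S) ⊆
          (B.filter fun S => s₀ * (μ + t) ≤ s₀ * f S) := by
        intro S hS
        rw [Finset.mem_filter] at hS ⊢
        exact ⟨hS.1, mul_le_mul_of_nonneg_left hS.2 hs₀0⟩
      have hcard : ((B.filter fun S => μ + t ≤ f S).card : ℝ) ≤
          ((B.filter fun S => s₀ * (μ + t) ≤ s₀ * f S).card : ℝ) := by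
        exact_mod_cast Finset.card_le_card hsub
      have hexp : (n:ℝ) * (p * s₀ + s₀^2/8) - s₀ * (μ + t) = -2 * t^2 / n := by
        rw [hμp, hs₀]
        have hn' : (n:ℝ) ≠ 0 := Nat.cast_ne_zero.2 hnpos.ne'
        field_simp
        ring
      have h2 : ((B.filter fun S => μ + t ≤ f S).card : ℝ) * Real.exp (s₀ * (μ + t))
          ≤ (N.choose n : ℝ) * Real.exp ((n:ℝ) * (p * s₀ + s₀^2/8)) :=
        le_trans (mul_le_mul_of_nonneg_right hcard (Real.exp_pos _).le) h1
      have h3 := mul_le_mul_of_nonneg_right h2 (Real.exp_pos (-(s₀ * (μ + t)))).le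
      rw [mul_assoc, mul_assoc, ← Real.exp_add, ← Real.exp_add, add_neg_cancel,
        Real.exp_zero, mul_one] at h3
      rw [show (n:ℝ) * (p * s₀ + s₀^2/8) + -(s₀ * (μ + t)) = -2 * t^2 / n by
        rw [← hexp]; ring] at h3
      exact h3
    -- lower tail
    have hlo : ((B.filter fun S => f S ≤ μ - t).card : ℝ) ≤
        (N.choose n : ℝ) * Real.exp (-2 * t^2 / n) := by
      have h1 : ((B.filter fun S => -s₀ * (μ - t) ≤ -s₀ * f S).card : ℝ)
            * Real.exp (-s₀ * (μ - t))
          ≤ (N.choose n : ℝ) * Real.exp ((n:ℝ) * (p * (-s₀) + (-s₀)^2/8)) :=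
        count_exp_le B (fun S => -s₀ * f S) (-s₀ * (μ - t)) _ (by
          have := hmain (-s₀)
          convert this using 3)
      have hsub : (B.filter fun S => f S ≤ μ - t) ⊆
          (B.filter fun S => -s₀ * (μ - t) ≤ -s₀ * f S) := by
        intro S hS
        rw [Finset.mem_filter] at hS ⊢
        refine ⟨hS.1, ?_⟩
        nlinarith [hS.2, hs₀0]
      have hcard : ((B.filter fun S => f S ≤ μ - t).card : ℝ) ≤
          ((B.filter fun S => -s₀ * (μ - t) ≤ -s₀ * f S).card : ℝ) := by
        exact_mod_cast Finset.card_le_card hsub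
      have hexp : (n:ℝ) * (p * (-s₀) + (-s₀)^2/8) - (-s₀ * (μ - t)) = -2 * t^2 / n := by
        rw [hμp, hs₀]
        have hn' : (n:ℝ) ≠ 0 := Nat.cast_ne_zero.2 hnpos.ne'
        field_simp
        ring
      have h2 : ((B.filter fun S => f S ≤ μ - t).card : ℝ) * Real.exp (-s₀ * (μ - t))
          ≤ (N.choose n : ℝ) * Real.exp ((n:ℝ) * (p * (-s₀) + (-s₀)^2/8)) :=
        le_trans (mul_le_mul_of_nonneg_right hcard (Real.exp_pos _).le) h1
      have h3 := mul_le_mul_of_nonneg_right h2 (Real.exp_pos (-(-s₀ * (μ - t)))).le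
      rw [mul_assoc, mul_assoc, ← Real.exp_add, ← Real.exp_add, add_neg_cancel,
        Real.exp_zero, mul_one] at h3
      rw [show (n:ℝ) * (p * (-s₀) + (-s₀)^2/8) + -(-s₀ * (μ - t)) = -2 * t^2 / n by
        rw [← hexp]; ring] at h3
      exact h3
    -- combine
    have hsplit : (B.filter fun S => t ≤ |f S - μ|) ⊆
        (B.filter fun S => μ + t ≤ f S) ∪ (B.filter fun S => f S ≤ μ - t) := by
      intro S hS
      rw [Finset.mem_filter] at hS
      rw [Finset.mem_union, Finset.mem_filter, Finset.mem_filter]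
      rcases le_abs.1 hS.2 with h | h
      · exact Or.inl ⟨hS.1, by linarith⟩
      · exact Or.inr ⟨hS.1, by linarith⟩
    have hcardB : (B.card : ℝ) = (N.choose n : ℝ) := by
      rw [hB, Finset.card_powersetCard, Finset.card_univ, Fintype.card_fin]
    have hfinal : ((B.filter fun S => t ≤ |f S - μ|).card : ℝ) ≤
        2 * Real.exp (-2 * t^2 / n) * (B.card : ℝ) := by
      have hc : ((B.filter fun S => t ≤ |f S - μ|).card : ℝ) ≤
          ((B.filter fun S => μ + t ≤ f S).card : ℝ) +
          ((B.filter fun S => f S ≤ μ - t).card : ℝ) := by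
        have := le_trans (Finset.card_le_card hsplit) (Finset.card_union_le _ _)
        exact_mod_cast this
      rw [hcardB]
      linarith
    exact hfinal
end
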